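/- arXiv:2602.09958 — 6 statements merged into one kernel-verified Lean document; each statement's English description precedes it below -/
import Mathlib

section
/- Let I ⊆ ℝ be an open interval, let k ≥ 1, and let f, g : I → ℝ be C^k functions such that f and g have only simple zeros in I and their zero sets coincide. Then there exists a nowhere-vanishing C^{k-1} function φ : I → ℝ such that f(x) = g(x)·φ(x) for all x ∈ I, and φ(a) = f'(a)/g'(a) at every common zero a. -/
open Set MeasureTheory intervalIntegral Metric Filter Topology

noncomputable def pInt (a : ℝ) (n : ℕ) (u : ℝ → ℝ) (x : ℝ) : ℝ :=
  ∫ t in (0:ℝ)..1, t ^ n * u (a + t * (x - a))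

lemma icc_path_mem {c d a x t : ℝ} (ha : a ∈ Set.Icc c d) (hx : x ∈ Set.Icc c d)
    (ht : t ∈ Set.Icc (0:ℝ) 1) : a + t * (x - a) ∈ Set.Icc c d := by
  obtain ⟨ha1, ha2⟩ := ha; obtain ⟨hx1, hx2⟩ := hx; obtain ⟨ht1, ht2⟩ := ht
  constructor <;> nlinarith

lemma exists_good_box {J : Set ℝ} (hJo : IsOpen J) (hJc : J.OrdConnected)
    {a x₀ : ℝ} (ha : a ∈ J) (hx₀ : x₀ ∈ J) :
    ∃ δ c d : ℝ, 0 < δ ∧ Set.Icc c d ⊆ J ∧ a ∈ Set.Icc c d ∧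
      Metric.ball x₀ δ ⊆ Set.Icc c d := by
  obtain ⟨ε, hε, hball⟩ := Metric.isOpen_iff.mp hJo x₀ hx₀
  set δ := ε / 2 with hδdef
  have hδ : 0 < δ := by positivity
  have hcb : Metric.closedBall x₀ δ ⊆ J :=
    subset_trans (Metric.closedBall_subset_ball (by simp [hδdef]; linarith)) hball
  refine ⟨δ, min a (x₀ - δ), max a (x₀ + δ), hδ, ?_, ⟨min_le_left _ _, le_max_left _ _⟩, ?_⟩
  · have hcJ : min a (x₀ - δ) ∈ J := by
      rcases min_choice a (x₀ - δ) with h | h <;> rw [h]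
      · exact ha
      · exact hcb (by simp [Metric.mem_closedBall, Real.dist_eq, abs_le]; linarith)
    have hdJ : max a (x₀ + δ) ∈ J := by
      rcases max_choice a (x₀ + δ) with h | h <;> rw [h]
      · exact ha
      · exact hcb (by simp [Metric.mem_closedBall, Real.dist_eq, abs_le]; linarith)
    exact hJc.out hcJ hdJ
  · intro y hy
    rw [Metric.mem_ball, Real.dist_eq, abs_lt] at hy
    exact ⟨le_trans (min_le_right _ _) (by linarith),
      le_trans (by linarith : y ≤ x₀ + δ) (le_max_right _ _)⟩

lemma contDiffOn_pInt {J : Set ℝ} (hJo : IsOpen J) (hJc : J.OrdConnected) {a : ℝ} (ha : a ∈ J) :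
    ∀ (m n : ℕ) (u : ℝ → ℝ), ContDiffOn ℝ m u J → ContDiffOn ℝ m (pInt a n u) J := by
  intro m
  induction m with
  | zero =>
    intro n u hu
    rw [show ((0:ℕ) : WithTop ℕ∞) = 0 from rfl, contDiffOn_zero] at hu ⊢
    intro x₀ hx₀
    apply ContinuousAt.continuousWithinAt
    obtain ⟨δ, c, d, hδ, hcd, haK, hballK⟩ := exists_good_box hJo hJc ha hx₀
    have hcled : c ≤ d := le_trans haK.1 haK.2
    have hclamp : ∀ y : ℝ, max c (min y d) ∈ Set.Icc c d :=
      fun y => ⟨le_max_left _ _, max_le hcled (min_le_right _ _)⟩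
    set v : ℝ → ℝ := fun y => u (max c (min y d)) with hv
    have hvcont : Continuous v :=
      hu.comp_continuous (continuous_const.max (continuous_id.min continuous_const))
        (fun y => hcd (hclamp y))
    have hG : Continuous fun x => ∫ t in (0:ℝ)..1, t ^ n * v (a + t * (x - a)) := by
      apply intervalIntegral.continuous_parametric_intervalIntegral_of_continuous'
        (f := fun x t => t ^ n * v (a + t * (x - a)))
      apply Continuous.mul <;> fun_prop
    refine hG.continuousAt.congr ?_
    filter_upwards [Metric.ball_mem_nhds x₀ hδ] with x hx
    apply intervalIntegral.integral_congr
    intro t ht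
    rw [Set.uIcc_of_le (by norm_num : (0:ℝ) ≤ 1)] at ht
    have hp : a + t * (x - a) ∈ Set.Icc c d := icc_path_mem haK (hballK hx) ht
    have : max c (min (a + t * (x - a)) d) = a + t * (x - a) := by
      rw [min_eq_left hp.2, max_eq_right hp.1]
    simp only [hv, this]
  | succ m ih =>
    intro n u hu
    have hmn : (m : WithTop ℕ∞) + 1 ≤ ((m + 1 : ℕ) : WithTop ℕ∞) := by norm_cast
    have hu' : ContDiffOn ℝ m (deriv u) J := hu.deriv_of_isOpen hJo hmn
    have hudiff : DifferentiableOn ℝ u J :=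
      hu.differentiableOn (by simp)
    have hucont : ContinuousOn u J := hu.continuousOn
    have hu'cont : ContinuousOn (deriv u) J := hu'.continuousOn
    have key : ∀ x₀ ∈ J, HasDerivAt (pInt a n u) (pInt a (n+1) (deriv u) x₀) x₀ := by
      intro x₀ hx₀
      obtain ⟨δ, c, d, hδ, hcd, haK, hballK⟩ := exists_good_box hJo hJc ha hx₀
      obtain ⟨C, hC⟩ := isCompact_Icc.exists_bound_of_continuousOn (hu'cont.mono hcd)
      have hx₀K : x₀ ∈ Set.Icc c d := hballK (Metric.mem_ball_self hδ)
      set F : ℝ → ℝ → ℝ := fun x t => t ^ n * u (a + t * (x - a)) with hF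
      set F' : ℝ → ℝ → ℝ := fun x t => t ^ n * (deriv u (a + t * (x - a)) * t) with hF'
      have hIoc : Set.uIoc (0:ℝ) 1 ⊆ Set.Icc (0:ℝ) 1 := by
        rw [Set.uIoc_of_le (by norm_num : (0:ℝ) ≤ 1)]
        exact Set.Ioc_subset_Icc_self
      have hIcc : Set.uIcc (0:ℝ) 1 = Set.Icc (0:ℝ) 1 := Set.uIcc_of_le (by norm_num)
      have hFcont : ∀ x ∈ Set.Icc c d, ContinuousOn (F x) (Set.Icc (0:ℝ) 1) := by
        intro x hx
        apply ContinuousOn.mul (by fun_prop)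
        exact hucont.comp (by fun_prop) (fun t ht => hcd (icc_path_mem haK hx ht))
      have hF'cont : ∀ x ∈ Set.Icc c d, ContinuousOn (F' x) (Set.Icc (0:ℝ) 1) := by
        intro x hx
        apply ContinuousOn.mul (by fun_prop)
        apply ContinuousOn.mul _ (by fun_prop)
        exact hu'cont.comp (by fun_prop) (fun t ht => hcd (icc_path_mem haK hx ht))
      have hmain := intervalIntegral.hasDerivAt_integral_of_dominated_loc_of_deriv_le
        (F := F) (F' := F') (x₀ := x₀) (a := 0) (b := 1) (μ := volume)
        (bound := fun _ => C) (Metric.ball_mem_nhds x₀ hδ)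
        (by
          filter_upwards [Metric.ball_mem_nhds x₀ hδ] with x hx
          exact ((hFcont x (hballK hx)).mono hIoc).aestronglyMeasurable measurableSet_uIoc)
        (((hFcont x₀ hx₀K).mono (by rw [hIcc])).intervalIntegrable)
        (((hF'cont x₀ hx₀K).mono hIoc).aestronglyMeasurable measurableSet_uIoc)
        (by
          apply Filter.Eventually.of_forall
          intro t ht x hx
          have htI : t ∈ Set.Icc (0:ℝ) 1 := hIoc ht
          have hp : a + t * (x - a) ∈ Set.Icc c d := icc_path_mem haK (hballK hx) htI
          have hb := hC _ hp
          have hC0 : 0 ≤ C := le_trans (norm_nonneg _) (hC a haK)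
          simp only [hF', Real.norm_eq_abs, abs_mul, abs_pow]
          have h1 : |t| ≤ 1 := by rw [abs_le]; constructor <;> linarith [htI.1, htI.2]
          have h2 : |t| ^ n ≤ 1 := pow_le_one₀ (abs_nonneg t) h1
          have h3 : |deriv u (a + t * (x - a))| ≤ C := hb
          calc |t| ^ n * (|deriv u (a + t * (x - a))| * |t|) ≤ 1 * (C * 1) :=
                mul_le_mul h2 (mul_le_mul h3 h1 (abs_nonneg _) hC0)
                  (by positivity) (by norm_num)
            _ = C := by ring)
        intervalIntegrable_const
        (by
          apply Filter.Eventually.of_forall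
          intro t ht x hx
          have htI : t ∈ Set.Icc (0:ℝ) 1 := hIoc ht
          have hp : a + t * (x - a) ∈ Set.Icc c d := icc_path_mem haK (hballK hx) htI
          have hdu : HasDerivAt u (deriv u (a + t * (x - a))) (a + t * (x - a)) :=
            (hudiff.differentiableAt (hJo.mem_nhds (hcd hp))).hasDerivAt
          have hinner : HasDerivAt (fun x : ℝ => a + t * (x - a)) t x := by
            simpa using (((hasDerivAt_id x).sub_const a).const_mul t).const_add a
          exact (hdu.comp x hinner).const_mul (t ^ n))
      have heq : (∫ t in (0:ℝ)..1, F' x₀ t) = pInt a (n+1) (deriv u) x₀ := by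
        apply intervalIntegral.integral_congr
        intro t _
        simp only [hF', pInt]
        ring
      rw [← heq]
      exact hmain.2
    have hdiffOn : DifferentiableOn ℝ (pInt a n u) J :=
      fun x hx => ((key x hx).differentiableAt).differentiableWithinAt
    have hderiv_eq : ∀ x ∈ J, deriv (pInt a n u) x = pInt a (n+1) (deriv u) x :=
      fun x hx => (key x hx).deriv
    rw [show ((m + 1 : ℕ) : WithTop ℕ∞) = (m : WithTop ℕ∞) + 1 by norm_cast]
    rw [contDiffOn_succ_iff_deriv_of_isOpen hJo]
    refine ⟨hdiffOn, ?_, ?_⟩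
    · intro h; simp at h
    · exact (ih (n+1) (deriv u) hu').congr hderiv_eq


lemma dslope_eq_pInt {J : Set ℝ} (hJo : IsOpen J) (hJc : J.OrdConnected) {a : ℝ} (ha : a ∈ J)
    {f : ℝ → ℝ} (hfd : DifferentiableOn ℝ f J) (hfc : ContinuousOn (deriv f) J) :
    ∀ x ∈ J, dslope f a x = ∫ t in (0:ℝ)..1, deriv f (a + t * (x - a)) := by
  intro x hx
  rcases eq_or_ne x a with rfl | hxa
  · simp [dslope_same]
  · rw [dslope_of_ne f hxa, slope_def_field]
    have hsub : Set.uIcc a x ⊆ J := hJc.uIcc_subset ha hx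
    have hxa' : x - a ≠ 0 := sub_ne_zero.mpr hxa
    have h1 : (∫ t in (0:ℝ)..1, deriv f (a + t * (x - a)))
        = ∫ t in (0:ℝ)..1, deriv f ((x - a) * t + a) := by
      apply intervalIntegral.integral_congr; intro t _; ring_nf
    rw [h1, intervalIntegral.integral_comp_mul_add (deriv f) hxa' a]
    rw [mul_zero, zero_add, mul_one]
    have h2 : (∫ s in a..(x - a + a), deriv f s) = f x - f a := by
      rw [show x - a + a = x by ring]
      apply intervalIntegral.integral_deriv_eq_sub
      · exact fun y hy => (hfd.differentiableAt (hJo.mem_nhds (hsub hy)))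
      · exact (hfc.mono hsub).intervalIntegrable
    rw [h2, smul_eq_mul]
    field_simp


lemma contDiffOn_dslope_aux {J : Set ℝ} (hJo : IsOpen J) (hJc : J.OrdConnected) {a : ℝ}
    (ha : a ∈ J) {f : ℝ → ℝ} {m : ℕ} (hf : ContDiffOn ℝ (m + 1 : ℕ) f J) :
    ContDiffOn ℝ m (dslope f a) J := by
  have hmn : (m : WithTop ℕ∞) + 1 ≤ ((m + 1 : ℕ) : WithTop ℕ∞) := by norm_cast
  have hf' : ContDiffOn ℝ m (deriv f) J := hf.deriv_of_isOpen hJo hmn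
  have hfd : DifferentiableOn ℝ f J :=
    hf.differentiableOn (by simp)
  refine (contDiffOn_pInt hJo hJc ha m 0 (deriv f) hf').congr ?_
  intro x hx
  rw [dslope_eq_pInt hJo hJc ha hfd hf'.continuousOn x hx]
  apply intervalIntegral.integral_congr
  intro t _
  simp [pInt]

/-- C^k quotient of real functions on an open interval. -/
theorem stmt_1 (I : Set ℝ) (hIopen : IsOpen I) (hIinterval : I.OrdConnected)
    (k : ℕ) (hk : 1 ≤ k) (f g : ℝ → ℝ)
    (hf : ContDiffOn ℝ k f I) (hg : ContDiffOn ℝ k g I)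
    (hfsimple : ∀ a ∈ I, f a = 0 → deriv f a ≠ 0)
    (hgsimple : ∀ a ∈ I, g a = 0 → deriv g a ≠ 0)
    (hzero : ∀ a ∈ I, (f a = 0 ↔ g a = 0)) :
    ∃ φ : ℝ → ℝ, ContDiffOn ℝ (k - 1 : ℕ) φ I ∧ (∀ x ∈ I, φ x ≠ 0) ∧
      (∀ x ∈ I, f x = g x * φ x) ∧
      (∀ a ∈ I, f a = 0 → φ a = deriv f a / deriv g a) := by
  classical
  have hk1 : k - 1 + 1 = k := Nat.succ_pred_eq_of_pos hk
  have hf' : ContDiffOn ℝ (k - 1 + 1 : ℕ) f I := by rwa [hk1]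
  have hg' : ContDiffOn ℝ (k - 1 + 1 : ℕ) g I := by rwa [hk1]
  set φ : ℝ → ℝ := fun x => if g x = 0 then deriv f x / deriv g x else f x / g x with hφ
  have hle : ((k - 1 : ℕ) : WithTop ℕ∞) ≤ (k : ℕ) := by exact_mod_cast Nat.sub_le k 1
  refine ⟨φ, ?_, ?_, ?_, ?_⟩
  · -- smoothness
    intro x hx
    by_cases hgx : g x = 0
    · have hfx : f x = 0 := (hzero x hx).mpr hgx
      set F := dslope f x with hFdef
      set G := dslope g x with hGdef
      have hF : ContDiffOn ℝ (k - 1 : ℕ) F I := contDiffOn_dslope_aux hIopen hIinterval hx hf'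
      have hG : ContDiffOn ℝ (k - 1 : ℕ) G I := contDiffOn_dslope_aux hIopen hIinterval hx hg'
      have hGx : G x ≠ 0 := by
        rw [hGdef, dslope_same]; exact hgsimple x hx hgx
      have hGcontAt : ContinuousAt G x := hG.continuousOn.continuousAt (hIopen.mem_nhds hx)
      have hev : ∀ᶠ y in 𝓝 x, G y ≠ 0 := hGcontAt.eventually_ne hGx
      obtain ⟨V, hVsub, hVopen, hxV⟩ :=
        _root_.mem_nhds_iff.mp (Filter.inter_mem (hIopen.mem_nhds hx) hev)
      have hVI : V ⊆ I := fun y hy => (hVsub hy).1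
      have hquot : ContDiffOn ℝ (k - 1 : ℕ) (fun y => F y / G y) V :=
        (hF.mono hVI).div (hG.mono hVI) (fun y hy => (hVsub hy).2)
      refine ((hquot.contDiffAt (hVopen.mem_nhds hxV)).congr_of_eventuallyEq ?_).contDiffWithinAt
      filter_upwards [hVopen.mem_nhds hxV] with y hy
      rcases eq_or_ne y x with rfl | hyx
      · simp only [hφ, if_pos hgx, hFdef, hGdef, dslope_same]
      · have hGy : G y ≠ 0 := (hVsub hy).2
        have hyx' : y - x ≠ 0 := sub_ne_zero.mpr hyx
        have hGval : G y = g y / (y - x) := by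
          rw [hGdef, dslope_of_ne g hyx, slope_def_field, hgx, sub_zero]
        have hgy : g y ≠ 0 := by
          intro h; apply hGy; rw [hGval, h, zero_div]
        have hFval : F y = f y / (y - x) := by
          rw [hFdef, dslope_of_ne f hyx, slope_def_field, hfx, sub_zero]
        simp only [hφ, if_neg hgy]
        rw [hFval, hGval]
        field_simp
    · have hU : IsOpen (I ∩ {y | g y ≠ 0}) := by
        have : I ∩ {y | g y ≠ 0} = I ∩ g ⁻¹' ({0}ᶜ) := rfl
        rw [this]
        exact hg.continuousOn.isOpen_inter_preimage hIopen isOpen_compl_singleton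
      have hquot : ContDiffOn ℝ (k - 1 : ℕ) (fun y => f y / g y) (I ∩ {y | g y ≠ 0}) :=
        (((hf.mono Set.inter_subset_left).div (hg.mono Set.inter_subset_left)
          (fun y hy => hy.2)).of_le hle)
      have hx' : x ∈ I ∩ {y | g y ≠ 0} := ⟨hx, hgx⟩
      refine ((hquot.contDiffAt (hU.mem_nhds hx')).congr_of_eventuallyEq ?_).contDiffWithinAt
      filter_upwards [hU.mem_nhds hx'] with y hy
      simp only [hφ, if_neg hy.2]
  · intro x hx
    by_cases hgx : g x = 0
    · simp only [hφ, if_pos hgx]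
      exact div_ne_zero (hfsimple x hx ((hzero x hx).mpr hgx)) (hgsimple x hx hgx)
    · have hfx : f x ≠ 0 := fun h => hgx ((hzero x hx).mp h)
      simp only [hφ, if_neg hgx]
      exact div_ne_zero hfx hgx
  · intro x hx
    by_cases hgx : g x = 0
    · rw [hgx, zero_mul]; exact (hzero x hx).mpr hgx
    · simp only [hφ, if_neg hgx]
      field_simp
  · intro a ha hfa
    simp only [hφ, if_pos ((hzero a ha).mp hfa)]
end

section
/- Let Ω ⊆ ℝⁿ be an open set with n ≥ 2, let k ≥ 1, and let f, g : Ω → ℝ be C^k functions with simple zeros whose zero sets Σ_f and Σ_g coincide. Then there exists a nowhere-vanishing C^{k-1} function φ : Ω → ℝ such that f(x) = g(x)·φ(x) for all x ∈ Ω. -/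
open Set Filter MeasureTheory intervalIntegral Topology

set_option maxHeartbeats 1000000
set_option synthInstance.maxHeartbeats 400000

/-- Smoothness of a parametric interval integral. -/
lemma aux_param (m : ℕ) : ∀ {E : Type} [NormedAddCommGroup E] [NormedSpace ℝ E] [ProperSpace E]
    {F : Type} [NormedAddCommGroup F] [NormedSpace ℝ F] [CompleteSpace F]
    {U : Set E}, IsOpen U → ∀ {G : E × ℝ → F},
    ContDiffOn ℝ m G (U ×ˢ Set.Ioo (-1:ℝ) 2) →
    ContDiffOn ℝ m (fun y => ∫ t in (0:ℝ)..1, G (y, t)) U := by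
  induction m with
  | zero =>
    intro E _ _ _ F _ _ _ U hU G hG
    have h0 : ((0:ℕ) : WithTop ℕ∞) = 0 := by norm_cast
    rw [h0] at hG ⊢
    rw [contDiffOn_zero] at hG ⊢
    have hopen : IsOpen (U ×ˢ Set.Ioo (-1:ℝ) 2) := hU.prod isOpen_Ioo
    intro y₀ hy₀
    apply ContinuousAt.continuousWithinAt
    obtain ⟨δ, δpos, hδ⟩ := Metric.nhds_basis_closedBall.mem_iff.mp (hU.mem_nhds hy₀)
    have hIsub : Set.uIoc (0:ℝ) 1 ⊆ Set.Ioo (-1:ℝ) 2 := by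
      rw [Set.uIoc_of_le (by norm_num : (0:ℝ) ≤ 1)]
      intro t ht; exact ⟨by linarith [ht.1], by linarith [ht.2]⟩
    have hIsub' : Set.uIoc (0:ℝ) 1 ⊆ Set.Icc (0:ℝ) 1 := by
      rw [Set.uIoc_of_le (by norm_num : (0:ℝ) ≤ 1)]
      exact Set.Ioc_subset_Icc_self
    have hK : IsCompact (Metric.closedBall y₀ δ ×ˢ Set.Icc (0:ℝ) 1) :=
      (isCompact_closedBall _ _).prod isCompact_Icc
    have hKsub : Metric.closedBall y₀ δ ×ˢ Set.Icc (0:ℝ) 1 ⊆ U ×ˢ Set.Ioo (-1:ℝ) 2 :=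
      Set.prod_mono hδ (fun t ht => ⟨by linarith [ht.1], by linarith [ht.2]⟩)
    obtain ⟨C, hC⟩ := hK.exists_bound_of_continuousOn (hG.mono hKsub)
    apply intervalIntegral.continuousAt_of_dominated_interval (bound := fun _ => C)
    · filter_upwards [Metric.closedBall_mem_nhds y₀ δpos] with y hy
      have : ContinuousOn (fun t : ℝ => G (y, t)) (Set.Ioo (-1:ℝ) 2) := by
        apply hG.comp (Continuous.continuousOn (by fun_prop))
        intro t ht; exact ⟨hδ hy, ht⟩
      exact (this.mono hIsub).aestronglyMeasurable measurableSet_uIoc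
    · filter_upwards [Metric.closedBall_mem_nhds y₀ δpos] with y hy
      filter_upwards with t
      intro ht
      exact hC (y, t) ⟨hy, hIsub' ht⟩
    · exact intervalIntegrable_const
    · filter_upwards with t
      intro ht
      have hmem : (y₀, t) ∈ U ×ˢ Set.Ioo (-1:ℝ) 2 := ⟨hy₀, hIsub ht⟩
      have hca : ContinuousAt G (y₀, t) := hG.continuousAt (hopen.mem_nhds hmem)
      have h2 : ContinuousAt (fun x : E => (x, t)) y₀ := by fun_prop
      exact ContinuousAt.comp (f := fun x : E => (x, t)) hca h2
  | succ m ih =>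
    intro E _ _ _ F _ _ _ U hU G hG
    have hc : ((m+1:ℕ) : WithTop ℕ∞) = (m : WithTop ℕ∞) + 1 := by push_cast; rfl
    rw [hc] at hG
    have hopen : IsOpen (U ×ˢ Set.Ioo (-1:ℝ) 2) := hU.prod isOpen_Ioo
    set G' : E × ℝ → (E →L[ℝ] F) :=
      fun p => (fderiv ℝ G p).comp (ContinuousLinearMap.inl ℝ E ℝ) with hG'def
    have hfd : ContDiffOn ℝ m (fun p => fderiv ℝ G p) (U ×ˢ Set.Ioo (-1:ℝ) 2) :=
      hG.fderiv_of_isOpen hopen le_rfl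
    have hG' : ContDiffOn ℝ m G' (U ×ˢ Set.Ioo (-1:ℝ) 2) := hfd.clm_comp contDiffOn_const
    have hIH := ih hU hG'
    have hIsub : Set.uIoc (0:ℝ) 1 ⊆ Set.Ioo (-1:ℝ) 2 := by
      rw [Set.uIoc_of_le (by norm_num : (0:ℝ) ≤ 1)]
      intro t ht; exact ⟨by linarith [ht.1], by linarith [ht.2]⟩
    have hIsub' : Set.uIoc (0:ℝ) 1 ⊆ Set.Icc (0:ℝ) 1 := by
      rw [Set.uIoc_of_le (by norm_num : (0:ℝ) ≤ 1)]
      exact Set.Ioc_subset_Icc_self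
    have hinl : ∀ (t : ℝ) (x : E), HasFDerivAt (fun y : E => (y, t))
        (ContinuousLinearMap.inl ℝ E ℝ) x := by
      intro t x
      have h : HasFDerivAt (fun y : E => (y, t)) ((ContinuousLinearMap.id ℝ E).prod 0) x :=
        HasFDerivAt.prodMk (hasFDerivAt_id x) (hasFDerivAt_const t x)
      convert h using 1
      ext <;> simp
    have hcontG : ContinuousOn G (U ×ˢ Set.Ioo (-1:ℝ) 2) := hG.continuousOn
    have hcontG' : ContinuousOn G' (U ×ˢ Set.Ioo (-1:ℝ) 2) := hG'.continuousOn
    have key : ∀ y₀ ∈ U, HasFDerivAt (fun y => ∫ t in (0:ℝ)..1, G (y, t))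
        (∫ t in (0:ℝ)..1, G' (y₀, t)) y₀ := by
      intro y₀ hy₀
      obtain ⟨δ, δpos, hδ⟩ := Metric.nhds_basis_closedBall.mem_iff.mp (hU.mem_nhds hy₀)
      have hK : IsCompact (Metric.closedBall y₀ δ ×ˢ Set.Icc (0:ℝ) 1) :=
        (isCompact_closedBall _ _).prod isCompact_Icc
      have hKsub : Metric.closedBall y₀ δ ×ˢ Set.Icc (0:ℝ) 1 ⊆ U ×ˢ Set.Ioo (-1:ℝ) 2 :=
        Set.prod_mono hδ (fun t ht => ⟨by linarith [ht.1], by linarith [ht.2]⟩)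
      obtain ⟨C, hC⟩ := hK.exists_bound_of_continuousOn (hcontG'.mono hKsub)
      apply intervalIntegral.hasFDerivAt_integral_of_dominated_of_fderiv_le
        (F' := fun y t => G' (y, t)) (bound := fun _ => C) (s := Metric.ball y₀ δ) (Metric.ball_mem_nhds y₀ δpos)
      · filter_upwards [Metric.closedBall_mem_nhds y₀ δpos] with y hy
        have : ContinuousOn (fun t : ℝ => G (y, t)) (Set.Ioo (-1:ℝ) 2) := by
          apply hcontG.comp (Continuous.continuousOn (by fun_prop))
          intro t ht; exact ⟨hδ hy, ht⟩
        exact (this.mono hIsub).aestronglyMeasurable measurableSet_uIoc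
      · apply ContinuousOn.intervalIntegrable
        have : ContinuousOn (fun t : ℝ => G (y₀, t)) (Set.Ioo (-1:ℝ) 2) := by
          apply hcontG.comp (Continuous.continuousOn (by fun_prop))
          intro t ht; exact ⟨hy₀, ht⟩
        apply this.mono
        rw [Set.uIcc_of_le (by norm_num : (0:ℝ) ≤ 1)]
        intro t ht; exact ⟨by linarith [ht.1], by linarith [ht.2]⟩
      · have : ContinuousOn (fun t : ℝ => G' (y₀, t)) (Set.Ioo (-1:ℝ) 2) := by
          apply hcontG'.comp (Continuous.continuousOn (by fun_prop))
          intro t ht; exact ⟨hy₀, ht⟩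
        exact (this.mono hIsub).aestronglyMeasurable measurableSet_uIoc
      · filter_upwards with t
        intro ht x hx
        exact hC (x, t) ⟨Metric.ball_subset_closedBall hx, hIsub' ht⟩
      · exact intervalIntegrable_const
      · filter_upwards with t
        intro ht x hx
        have hmem : (x, t) ∈ U ×ˢ Set.Ioo (-1:ℝ) 2 :=
          ⟨hδ (Metric.ball_subset_closedBall hx), hIsub ht⟩
        have hdiff : DifferentiableAt ℝ G (x, t) :=
          (hG.contDiffAt (hopen.mem_nhds hmem)).differentiableAt (by simp)
        exact hdiff.hasFDerivAt.comp x (hinl t x)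
    rw [hc, contDiffOn_succ_iff_fderiv_of_isOpen hU]
    refine ⟨fun y hy => ((key y hy).differentiableAt).differentiableWithinAt, ?_, ?_⟩
    · intro h; exact absurd h (by simp)
    · exact hIH.congr fun y hy => (key y hy).fderiv

lemma grad_ne {n : ℕ} (h : EuclideanSpace ℝ (Fin n) → ℝ) (x : EuclideanSpace ℝ (Fin n))
    (hgr : gradient h x ≠ 0) : fderiv ℝ h x ≠ 0 := by
  intro hfd
  apply hgr
  unfold gradient
  rw [hfd, map_zero]

lemma key_local {n k : ℕ} (hk : 1 ≤ k)
    {Ω : Set (EuclideanSpace ℝ (Fin n))} (hΩ : IsOpen Ω)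
    {f g φ : EuclideanSpace ℝ (Fin n) → ℝ}
    (hf : ContDiffOn ℝ k f Ω) (hg : ContDiffOn ℝ k g Ω)
    (hfsimple : ∀ a ∈ Ω, f a = 0 → gradient f a ≠ 0)
    (hgsimple : ∀ a ∈ Ω, g a = 0 → gradient g a ≠ 0)
    (hzero : ∀ a ∈ Ω, (f a = 0 ↔ g a = 0))
    (hφ1 : ∀ x, g x ≠ 0 → φ x = f x / g x)
    (hφ2 : ∀ x, g x = 0 → φ x = limUnder (nhdsWithin x {y | g y ≠ 0}) (fun y => f y / g y))
    {a : EuclideanSpace ℝ (Fin n)} (ha : a ∈ Ω) (hga : g a = 0) :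
    ContDiffAt ℝ (k - 1 : ℕ) φ a ∧ φ a ≠ 0 := by
  classical
  have hk' : (1 : WithTop ℕ∞) ≤ (k : ℕ) := by exact_mod_cast hk
  have hk0 : ((k : ℕ) : WithTop ℕ∞) ≠ 0 := by exact_mod_cast (by omega : k ≠ 0)
  have hcast2 : ((k - 1 : ℕ) : WithTop ℕ∞) ≤ (k : ℕ) := by exact_mod_cast Nat.sub_le k 1
  have hcast1 : ((k - 1 : ℕ) : WithTop ℕ∞) + 1 ≤ (k : ℕ) := by
    have h : ((k - 1 : ℕ) : WithTop ℕ∞) + 1 = ((k - 1 + 1 : ℕ) : WithTop ℕ∞) := by push_cast; ring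
    rw [h, Nat.sub_add_cancel hk]
  have hfa : f a = 0 := (hzero a ha).mpr hga
  have hnhdsa : Ω ∈ 𝓝 a := hΩ.mem_nhds ha
  have hgca : ContDiffAt ℝ (k : ℕ) g a := hg.contDiffAt hnhdsa
  have hfca : ContDiffAt ℝ (k : ℕ) f a := hf.contDiffAt hnhdsa
  set L : (EuclideanSpace ℝ (Fin n)) →L[ℝ] ℝ := fderiv ℝ g a with hLdef
  have hL : L ≠ 0 := grad_ne g a (hgsimple a ha hga)
  obtain ⟨w, hw⟩ : ∃ w, L w ≠ 0 := by
    by_contra h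
    push_neg at h
    exact hL (ContinuousLinearMap.ext fun w => by simpa using h w)
  set v : (EuclideanSpace ℝ (Fin n)) := (L w)⁻¹ • w with hvdef
  have hv : L v = 1 := by
    rw [hvdef, _root_.map_smul]
    field_simp
    simp [hw]
  set Ψ : (EuclideanSpace ℝ (Fin n)) → (EuclideanSpace ℝ (Fin n)) := fun x => x + (g x - L x) • v with hΨdef
  have hgΨ : ∀ x, L (Ψ x) = g x := by
    intro x
    simp only [hΨdef, map_add, _root_.map_smul, smul_eq_mul, hv]
    ring
  have hΨca : ContDiffAt ℝ (k : ℕ) Ψ a :=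
    contDiffAt_id.add ((hgca.sub (L.contDiff.contDiffAt)).smul contDiffAt_const)
  have hgd : HasFDerivAt g L a := by
    rw [hLdef]
    exact (hgca.differentiableAt hk0).hasFDerivAt
  have hΨd : HasFDerivAt Ψ
      ((ContinuousLinearEquiv.refl ℝ (EuclideanSpace ℝ (Fin n)) : (EuclideanSpace ℝ (Fin n)) ≃L[ℝ] (EuclideanSpace ℝ (Fin n))) : (EuclideanSpace ℝ (Fin n)) →L[ℝ] (EuclideanSpace ℝ (Fin n))) a := by
    have h1 : HasFDerivAt (fun x => g x - L x) (L - L) a := hgd.sub L.hasFDerivAt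
    rw [sub_self] at h1
    have h2 := (hasFDerivAt_id a).add (h1.smul_const v)
    exact h2.congr_fderiv (by ext y; simp)
  set S := hΨca.hasStrictFDerivAt' hΨd hk0 with hSdef
  set Ψinv : (EuclideanSpace ℝ (Fin n)) → (EuclideanSpace ℝ (Fin n)) := S.localInverse Ψ _ a with hΨinvdef
  have hinv_ca : ContDiffAt ℝ (k : ℕ) Ψinv (Ψ a) := hΨca.to_localInverse hΨd hk0
  set b : (EuclideanSpace ℝ (Fin n)) := Ψ a with hbdef
  have hinv_b : Ψinv b = a := S.localInverse_apply_image
  have hinv_cont : ContinuousAt Ψinv b := hinv_ca.continuousAt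
  have hLb : L b = 0 := by rw [hbdef, hgΨ, hga]
  set F : (EuclideanSpace ℝ (Fin n)) → ℝ := fun y => f (Ψinv y) with hFdef
  have hFca : ContDiffAt ℝ (k : ℕ) F b := by
    have h1 : ContDiffAt ℝ (k : ℕ) f (Ψinv b) := by rw [hinv_b]; exact hfca
    exact h1.comp b hinv_ca
  obtain ⟨u, hu_nhds, hFu⟩ := hFca.contDiffOn le_rfl (by simp)
  have ev1 : ∀ᶠ y in 𝓝 b, Ψ (Ψinv y) = y := S.eventually_right_inverse
  have ev2 : ∀ᶠ y in 𝓝 b, Ψinv y ∈ Ω :=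
    hinv_cont.preimage_mem_nhds (by rw [hinv_b]; exact hnhdsa)
  have ev3 : ∀ᶠ y in 𝓝 b, y ∈ u := hu_nhds
  obtain ⟨R, Rpos, hR⟩ := Metric.eventually_nhds_iff_ball.mp (ev1.and (ev2.and ev3))
  have hFB : ContDiffOn ℝ (k : ℕ) F (Metric.ball b R) :=
    hFu.mono fun y hy => (hR y hy).2.2
  have hRI : ∀ y ∈ Metric.ball b R, Ψ (Ψinv y) = y := fun y hy => (hR y hy).1
  have hmemΩ : ∀ y ∈ Metric.ball b R, Ψinv y ∈ Ω := fun y hy => (hR y hy).2.1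
  have hgI : ∀ y ∈ Metric.ball b R, g (Ψinv y) = L y := by
    intro y hy
    rw [← hgΨ (Ψinv y), hRI y hy]
  have hF0 : ∀ y ∈ Metric.ball b R, L y = 0 → F y = 0 := by
    intro y hy hLy
    exact (hzero (Ψinv y) (hmemΩ y hy)).mpr (by rw [hgI y hy]; exact hLy)
  -- the path c
  set c : (EuclideanSpace ℝ (Fin n)) × ℝ → (EuclideanSpace ℝ (Fin n)) := fun p => p.1 + ((p.2 - 1) * L p.1) • v with hcdef
  have hc1 : ∀ y, c (y, 1) = y := by intro y; simp [hcdef]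
  have hLc : ∀ y t, L (c (y, t)) = L y + (t - 1) * L y := by
    intro y t
    simp [hcdef, map_add, _root_.map_smul, smul_eq_mul, hv]
  -- choice of radius
  set Mc : ℝ := 1 + 2 * ‖L‖ * ‖v‖ with hMdef
  have hM1 : 1 ≤ Mc := by
    have h := mul_nonneg (norm_nonneg L) (norm_nonneg v)
    rw [hMdef]; nlinarith
  have hMpos : 0 < Mc := lt_of_lt_of_le one_pos hM1
  set r : ℝ := R / Mc with hrdef
  have hrpos : 0 < r := div_pos Rpos hMpos
  have hc_mem : ∀ y ∈ Metric.ball b r, ∀ t ∈ Set.Ioo (-1:ℝ) 2, c (y, t) ∈ Metric.ball b R := by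
    intro y hy t ht
    have hyb : ‖y - b‖ < r := by rw [← dist_eq_norm]; exact hy
    have hLy : L y = L (y - b) := by rw [map_sub, hLb, sub_zero]
    have hdiff : c (y, t) - b = (y - b) + ((t - 1) * L (y - b)) • v := by
      simp only [hcdef, ← hLy]
      abel
    rw [Metric.mem_ball, dist_eq_norm, hdiff]
    have h1 : ‖(y - b) + ((t - 1) * L (y - b)) • v‖ ≤ ‖y - b‖ + |t - 1| * |L (y - b)| * ‖v‖ := by
      refine (norm_add_le _ _).trans (le_of_eq ?_)
      rw [norm_smul, Real.norm_eq_abs, abs_mul]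
    have h2 : |L (y - b)| ≤ ‖L‖ * ‖y - b‖ := by
      rw [← Real.norm_eq_abs]
      exact L.le_opNorm _
    have h3 : |t - 1| ≤ 2 := by
      rw [abs_le]
      constructor
      · linarith [ht.1]
      · linarith [ht.2]
    have h4 : ‖y - b‖ * Mc < r * Mc := mul_lt_mul_of_pos_right hyb hMpos
    have h5 : r * Mc = R := by rw [hrdef]; field_simp
    have h7 : |t - 1| * |L (y - b)| ≤ 2 * (‖L‖ * ‖y - b‖) :=
      mul_le_mul h3 h2 (abs_nonneg _) (by norm_num)
    have h8 : |t - 1| * |L (y - b)| * ‖v‖ ≤ 2 * (‖L‖ * ‖y - b‖) * ‖v‖ :=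
      mul_le_mul_of_nonneg_right h7 (norm_nonneg v)
    have h6 : ‖y - b‖ * Mc < R := by rw [← h5]; exact h4
    rw [hMdef] at h6
    refine lt_of_le_of_lt h1 ?_
    nlinarith [h8, h6]
  -- integrand and H
  set G : (EuclideanSpace ℝ (Fin n)) × ℝ → ℝ := fun p => (fderiv ℝ F (c p)) v with hGdef
  have hc_smooth : ContDiff ℝ ((k - 1 : ℕ) : WithTop ℕ∞) c := by
    apply ContDiff.add contDiff_fst
    exact ((contDiff_snd.sub contDiff_const).mul (L.contDiff.comp contDiff_fst)).smul contDiff_const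
  have hfderivF : ContDiffOn ℝ ((k - 1 : ℕ) : WithTop ℕ∞) (fderiv ℝ F) (Metric.ball b R) :=
    hFB.fderiv_of_isOpen Metric.isOpen_ball hcast1
  have hmaps : Set.MapsTo c (Metric.ball b r ×ˢ Set.Ioo (-1:ℝ) 2) (Metric.ball b R) :=
    fun p hp => hc_mem p.1 hp.1 p.2 hp.2
  have hGcd : ContDiffOn ℝ ((k - 1 : ℕ) : WithTop ℕ∞) G
      (Metric.ball b r ×ˢ Set.Ioo (-1:ℝ) 2) := by
    have h1 : ContDiffOn ℝ ((k - 1 : ℕ) : WithTop ℕ∞) (fun p => fderiv ℝ F (c p))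
        (Metric.ball b r ×ˢ Set.Ioo (-1:ℝ) 2) :=
      hfderivF.comp hc_smooth.contDiffOn hmaps
    exact h1.clm_apply contDiffOn_const
  set H : (EuclideanSpace ℝ (Fin n)) → ℝ := fun y => ∫ t in (0:ℝ)..1, G (y, t) with hHdef
  have hH : ContDiffOn ℝ ((k - 1 : ℕ) : WithTop ℕ∞) H (Metric.ball b r) :=
    aux_param (k-1) Metric.isOpen_ball hGcd
  -- FTC
  have hsub01 : Set.uIcc (0:ℝ) 1 ⊆ Set.Ioo (-1:ℝ) 2 := by
    rw [Set.uIcc_of_le (by norm_num : (0:ℝ) ≤ 1)]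
    intro t ht
    exact ⟨by linarith [ht.1], by linarith [ht.2]⟩
  have hFcont : ContinuousOn (fderiv ℝ F) (Metric.ball b R) := hfderivF.continuousOn
  have key1 : ∀ y ∈ Metric.ball b r, F y = L y * H y := by
    intro y hy
    have hder : ∀ t ∈ Set.uIcc (0:ℝ) 1,
        HasDerivAt (fun t => F (c (y, t))) (L y * G (y, t)) t := by
      intro t ht
      have hct : c (y, t) ∈ Metric.ball b R := hc_mem y hy t (hsub01 ht)
      have hFd : DifferentiableAt ℝ F (c (y, t)) :=
        (hFB.contDiffAt (Metric.isOpen_ball.mem_nhds hct)).differentiableAt hk0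
      have h1 : HasDerivAt (fun s : ℝ => (s - 1) * L y) (L y) t := by
        simpa using ((hasDerivAt_id t).sub_const 1).mul_const (L y)
      have h2 : HasDerivAt (fun s : ℝ => c (y, s)) ((L y) • v) t := by
        have h3 := (h1.smul_const v).const_add y
        simpa [hcdef] using h3
      have h4 := hFd.hasFDerivAt.comp_hasDerivAt t h2
      simpa [Function.comp_def, hGdef, _root_.map_smul, smul_eq_mul, mul_comm] using h4
    have hcint : ContinuousOn (fun t : ℝ => G (y, t)) (Set.uIcc (0:ℝ) 1) := by
      have hca : ContinuousOn (fun t : ℝ => fderiv ℝ F (c (y, t))) (Set.uIcc (0:ℝ) 1) := by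
        apply hFcont.comp (hc_smooth.continuous.comp (by fun_prop : Continuous
          (fun t : ℝ => ((y, t) : (EuclideanSpace ℝ (Fin n)) × ℝ)))).continuousOn
        intro t ht
        exact hc_mem y hy t (hsub01 ht)
      exact hca.clm_apply continuousOn_const
    have hint : IntervalIntegrable (fun t => L y * G (y, t)) volume 0 1 :=
      (continuousOn_const.mul hcint).intervalIntegrable
    have hFTC := intervalIntegral.integral_eq_sub_of_hasDerivAt hder hint
    have hc0mem : c (y, 0) ∈ Metric.ball b R := hc_mem y hy 0 (by norm_num)
    have hc0L : L (c (y, 0)) = 0 := by rw [hLc]; ring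
    have hF00 : F (c (y, 0)) = 0 := hF0 _ hc0mem hc0L
    rw [hc1 y, hF00, sub_zero] at hFTC
    rw [hHdef]
    simp only []
    rw [← intervalIntegral.integral_const_mul]
    exact hFTC.symm
  -- neighborhood of a
  have e2 : ∀ᶠ x in 𝓝 a, Ψ x ∈ Metric.ball b r := by
    apply hΨca.continuousAt.preimage_mem_nhds
    rw [← hbdef]
    exact Metric.ball_mem_nhds b hrpos
  have e3 : ∀ᶠ x in 𝓝 a, Ψinv (Ψ x) = x := S.eventually_left_inverse
  have e1 : ∀ᶠ x in 𝓝 a, x ∈ Ω := hnhdsa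
  obtain ⟨N, hN, hNopen, haN⟩ := eventually_nhds_iff.mp (e1.and (e2.and e3))
  have hNkey : ∀ x ∈ N, f x = g x * H (Ψ x) := by
    intro x hx
    obtain ⟨hxΩ, hxball, hxinv⟩ := hN x hx
    have h1 : F (Ψ x) = f x := by rw [hFdef]; simp only []; rw [hxinv]
    have h2 := key1 (Ψ x) hxball
    rw [h1, hgΨ] at h2
    exact h2
  have hφeq : ∀ x ∈ N, φ x = H (Ψ x) := by
    intro x hx
    obtain ⟨hxΩ, hxball, hxinv⟩ := hN x hx
    by_cases hgx : g x = 0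
    · rw [hφ2 x hgx]
      have hgcx : ContDiffAt ℝ (k:ℕ) g x := hg.contDiffAt (hΩ.mem_nhds hxΩ)
      have hΨcx : ContinuousAt Ψ x :=
        continuousAt_id.add ((hgcx.continuousAt.sub L.continuous.continuousAt).smul
          continuousAt_const)
      have hHcx : ContinuousAt H (Ψ x) :=
        hH.continuousOn.continuousAt (Metric.isOpen_ball.mem_nhds hxball)
      have hcomp : ContinuousAt (fun z => H (Ψ z)) x := hHcx.comp hΨcx
      have hne : (𝓝[{y | g y ≠ 0}] x).NeBot := by
        rw [← mem_closure_iff_nhdsWithin_neBot]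
        have hLx : fderiv ℝ g x ≠ 0 := grad_ne g x (hgsimple x hxΩ hgx)
        obtain ⟨w', hw'⟩ : ∃ w', fderiv ℝ g x w' ≠ 0 := by
          by_contra hcon
          push_neg at hcon
          exact hLx (ContinuousLinearMap.ext fun z => by simpa using hcon z)
        have hgdx : HasFDerivAt g (fderiv ℝ g x) x :=
          (hgcx.differentiableAt hk0).hasFDerivAt
        have hcurve : HasDerivAt (fun s : ℝ => x + s • w') w' 0 := by
          simpa using ((hasDerivAt_id (0:ℝ)).smul_const w').const_add x
        have hgc : HasDerivAt (fun s : ℝ => g (x + s • w')) (fderiv ℝ g x w') 0 := by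
          have h := hgdx.comp_hasDerivAt_of_eq 0 hcurve (by simp)
          exact h
        rw [hasDerivAt_iff_tendsto_slope] at hgc
        have hslope_ne : ∀ᶠ s in 𝓝[≠] (0:ℝ), slope (fun s : ℝ => g (x + s • w')) 0 s ≠ 0 :=
          hgc.eventually_ne hw'
        have hgne : ∀ᶠ s in 𝓝[≠] (0:ℝ), g (x + s • w') ≠ 0 := by
          filter_upwards [hslope_ne] with s hs hgz
          apply hs
          simp [slope, hgz, hgx]
        have htends : Tendsto (fun s : ℝ => x + s • w') (𝓝[≠] (0:ℝ)) (𝓝 x) := by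
          have hcont : Continuous (fun s : ℝ => x + s • w') := by fun_prop
          have h := hcont.tendsto 0
          simp only [zero_smul, add_zero] at h
          exact h.mono_left nhdsWithin_le_nhds
        exact mem_closure_of_frequently_of_tendsto
          (Filter.Eventually.frequently hgne) htends
      have htendH : Tendsto (fun z => H (Ψ z)) (𝓝[{y | g y ≠ 0}] x) (𝓝 (H (Ψ x))) :=
        hcomp.tendsto.mono_left nhdsWithin_le_nhds
      have heq : (fun y => f y / g y) =ᶠ[𝓝[{y | g y ≠ 0}] x] (fun z => H (Ψ z)) := by
        have hXN : ∀ᶠ z in 𝓝[{y | g y ≠ 0}] x, z ∈ N :=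
          eventually_nhdsWithin_of_eventually_nhds (hNopen.mem_nhds hx)
        filter_upwards [hXN, self_mem_nhdsWithin] with z hzN hzg
        have h := hNkey z hzN
        rw [h]
        field_simp
      exact (htendH.congr' heq.symm).limUnder_eq
    · rw [hφ1 x hgx, hNkey x hx]
      field_simp
  -- conclusion
  have hbmem : b ∈ Metric.ball b r := Metric.mem_ball_self hrpos
  have hHb : ContDiffAt ℝ ((k - 1 : ℕ) : WithTop ℕ∞) H b :=
    hH.contDiffAt (Metric.isOpen_ball.mem_nhds hbmem)
  have hHΨ : ContDiffAt ℝ ((k - 1 : ℕ) : WithTop ℕ∞) (fun z => H (Ψ z)) a := by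
    have h1 : ContDiffAt ℝ ((k - 1 : ℕ) : WithTop ℕ∞) H (Ψ a) := by rw [← hbdef]; exact hHb
    exact h1.comp a (hΨca.of_le hcast2)
  have hφH : φ =ᶠ[𝓝 a] fun z => H (Ψ z) := by
    filter_upwards [hNopen.mem_nhds haN] with z hz using hφeq z hz
  refine ⟨hHΨ.congr_of_eventuallyEq hφH, ?_⟩
  have hφa : φ a = H b := by
    have := hφeq a haN
    rw [this, ← hbdef]
  set Mb := fderiv ℝ F b with hMbdef
  have hcb : ∀ t : ℝ, c (b, t) = b := by
    intro t
    simp [hcdef, hLb]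
  have hHbval : H b = Mb v := by
    rw [hHdef]
    simp only [hGdef]
    have heq : (fun t => (fderiv ℝ F (c (b, t))) v) = fun _ : ℝ => Mb v :=
      funext fun t => by rw [hcb t, hMbdef]
    rw [heq]
    simp
  have hFdb : DifferentiableAt ℝ F b :=
    (hFB.contDiffAt (Metric.isOpen_ball.mem_nhds (Metric.mem_ball_self Rpos))).differentiableAt hk0
  have hker : ∀ z, L z = 0 → Mb z = 0 := by
    intro z hz
    have hmem : ∀ᶠ s : ℝ in 𝓝 0, b + s • z ∈ Metric.ball b R := by
      have hcontc : ContinuousAt (fun s : ℝ => b + s • z) 0 := by fun_prop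
      apply hcontc.preimage_mem_nhds
      simpa using Metric.ball_mem_nhds b Rpos
    have hev : (fun s : ℝ => F (b + s • z)) =ᶠ[𝓝 (0:ℝ)] fun _ => 0 := by
      filter_upwards [hmem] with s hs
      apply hF0 _ hs
      rw [map_add, _root_.map_smul, hLb, hz]
      simp
    have hcurve : HasDerivAt (fun s : ℝ => b + s • z) z 0 := by
      simpa using ((hasDerivAt_id (0:ℝ)).smul_const z).const_add b
    have hd1 : HasDerivAt (fun s : ℝ => F (b + s • z)) (Mb z) 0 := by
      have h := hFdb.hasFDerivAt.comp_hasDerivAt_of_eq 0 hcurve (by simp)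
      exact h
    have hd2 : HasDerivAt (fun s : ℝ => F (b + s • z)) 0 0 :=
      (hasDerivAt_const (0:ℝ) (0:ℝ)).congr_of_eventuallyEq hev
    exact hd1.unique hd2
  have hMbv : Mb v ≠ 0 := by
    intro h0
    have hMb0 : ∀ z, Mb z = 0 := by
      intro z
      have hdecomp : z = (z - (L z) • v) + (L z) • v := by abel
      have h1 : Mb (z - (L z) • v) = 0 := by
        apply hker
        rw [map_sub, _root_.map_smul, hv, smul_eq_mul, mul_one, sub_self]
      calc Mb z = Mb ((z - (L z) • v) + (L z) • v) := by rw [← hdecomp]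
        _ = Mb (z - L z • v) + L z * Mb v := by rw [map_add, _root_.map_smul, smul_eq_mul]
        _ = 0 := by rw [h1, h0]; ring
    have hfF : f =ᶠ[𝓝 a] fun x => F (Ψ x) := by
      filter_upwards [hNopen.mem_nhds haN] with z hz
      obtain ⟨_, _, hzinv⟩ := hN z hz
      rw [hFdef]
      simp only []
      rw [hzinv]
    have hDF : HasFDerivAt (fun x => F (Ψ x))
        (Mb.comp ((ContinuousLinearEquiv.refl ℝ (EuclideanSpace ℝ (Fin n)) : (EuclideanSpace ℝ (Fin n)) ≃L[ℝ] (EuclideanSpace ℝ (Fin n))) : (EuclideanSpace ℝ (Fin n)) →L[ℝ] (EuclideanSpace ℝ (Fin n)))) a := by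
      have hFb : HasFDerivAt F Mb b := hFdb.hasFDerivAt
      rw [hbdef] at hFb
      exact hFb.comp a hΨd
    have hDf : HasFDerivAt f
        (Mb.comp ((ContinuousLinearEquiv.refl ℝ (EuclideanSpace ℝ (Fin n)) : (EuclideanSpace ℝ (Fin n)) ≃L[ℝ] (EuclideanSpace ℝ (Fin n))) : (EuclideanSpace ℝ (Fin n)) →L[ℝ] (EuclideanSpace ℝ (Fin n)))) a :=
      hDF.congr_of_eventuallyEq hfF
    have hzero' : fderiv ℝ f a = 0 := by
      rw [hDf.fderiv]
      ext z
      simp [hMb0]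
    exact grad_ne f a (hfsimple a ha hfa) hzero'
  rw [hφa, hHbval]
  exact hMbv


/-- C^k quotient of real functions in arbitrary dimension. -/
theorem stmt_3 (n : ℕ) (hn : 2 ≤ n) (k : ℕ) (hk : 1 ≤ k)
    (Ω : Set (EuclideanSpace ℝ (Fin n))) (hΩ : IsOpen Ω)
    (f g : EuclideanSpace ℝ (Fin n) → ℝ)
    (hf : ContDiffOn ℝ k f Ω) (hg : ContDiffOn ℝ k g Ω)
    (hfsimple : ∀ a ∈ Ω, f a = 0 → gradient f a ≠ 0)
    (hgsimple : ∀ a ∈ Ω, g a = 0 → gradient g a ≠ 0)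
    (hzero : ∀ a ∈ Ω, (f a = 0 ↔ g a = 0)) :
    ∃ φ : EuclideanSpace ℝ (Fin n) → ℝ, ContDiffOn ℝ (k - 1 : ℕ) φ Ω ∧
      (∀ x ∈ Ω, φ x ≠ 0) ∧ (∀ x ∈ Ω, f x = g x * φ x) := by
  classical
  have hcast2 : ((k - 1 : ℕ) : WithTop ℕ∞) ≤ (k : ℕ) := by exact_mod_cast Nat.sub_le k 1
  set φ : EuclideanSpace ℝ (Fin n) → ℝ := fun x =>
    if g x = 0 then limUnder (nhdsWithin x {y | g y ≠ 0}) (fun y => f y / g y)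
    else f x / g x with hφdef
  have hφ1 : ∀ x, g x ≠ 0 → φ x = f x / g x := by
    intro x hx
    simp only [hφdef, if_neg hx]
  have hφ2 : ∀ x, g x = 0 →
      φ x = limUnder (nhdsWithin x {y | g y ≠ 0}) (fun y => f y / g y) := by
    intro x hx
    simp only [hφdef, if_pos hx]
  refine ⟨φ, ?_, ?_, ?_⟩
  · intro x hx
    apply ContDiffAt.contDiffWithinAt
    by_cases hgx : g x = 0
    · exact (key_local hk hΩ hf hg hfsimple hgsimple hzero hφ1 hφ2 hx hgx).1
    · have hev : ∀ᶠ z in 𝓝 x, g z ≠ 0 := by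
        have hc : ContinuousAt g x := (hg.contDiffAt (hΩ.mem_nhds hx)).continuousAt
        exact hc.eventually_ne hgx
      have hdiv : ContDiffAt ℝ ((k - 1 : ℕ) : WithTop ℕ∞) (fun z => f z / g z) x :=
        ((hf.contDiffAt (hΩ.mem_nhds hx)).div (hg.contDiffAt (hΩ.mem_nhds hx)) hgx).of_le hcast2
      apply hdiv.congr_of_eventuallyEq
      filter_upwards [hev] with z hz using hφ1 z hz
  · intro x hx
    by_cases hgx : g x = 0
    · exact (key_local hk hΩ hf hg hfsimple hgsimple hzero hφ1 hφ2 hx hgx).2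
    · rw [hφ1 x hgx]
      have hfx : f x ≠ 0 := fun h => hgx ((hzero x hx).mp h)
      exact div_ne_zero hfx hgx
  · intro x hx
    by_cases hgx : g x = 0
    · rw [(hzero x hx).mpr hgx, hgx, zero_mul]
    · rw [hφ1 x hgx]
      field_simp
end

section
/- Let Ω ⊆ ℝⁿ (n ≥ 2) be open and let f, g : Ω → ℂ be C¹ functions with simple zeros sharing a common zero set Γ. If f and g are complex linearly related, i.e., for every a ∈ Γ there exists λ(a) ∈ ℂ with Df|_a = λ(a)·Dg|_a as real linear maps ℝⁿ → ℂ, then there exists a nowhere-vanishing continuous function φ : Ω → ℂ such that f = g·φ on Ω. -/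
open Metric Set Filter Topology

section Aux

variable {E : Type*} [NormedAddCommGroup E] [NormedSpace ℝ E] [CompleteSpace E]

lemma zeros_near {g : E → ℂ} {A : E →L[ℝ] ℂ} {a : E}
    (hg : HasStrictFDerivAt g A a) (ha : g a = 0)
    (hsurj : LinearMap.range (A : E →ₗ[ℝ] ℂ) = ⊤) :
    ∃ C > (0:ℝ), ∀ ε > (0:ℝ), ∀ᶠ x in 𝓝 a,
      ∃ p, g p = 0 ∧ dist x p ≤ C * ‖g x‖ ∧ dist p a < ε := by
  set f'symm := A.nonlinearRightInverseOfSurjective hsurj with hf'symm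
  have Mpos' : 0 < f'symm.nnnorm := A.nonlinearRightInverseOfSurjective_nnnorm_pos hsurj
  have Mpos : 0 < (f'symm.nnnorm : ℝ) := by exact_mod_cast Mpos'
  set M : ℝ := (f'symm.nnnorm : ℝ) with hM
  set c : NNReal := f'symm.nnnorm⁻¹ / 2 with hc
  have cpos : 0 < c := by
    rw [hc]
    exact half_pos (by simpa [inv_pos] using Mpos')
  have hcoe : (c : ℝ) = M⁻¹ / 2 := by
    simp [hc, hM, NNReal.coe_div, NNReal.coe_inv]
  obtain ⟨s, hs, happrox⟩ := hg.approximates_deriv_on_nhds (Or.inr cpos)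
  obtain ⟨r, rpos, hr⟩ : ∃ r > 0, closedBall a r ⊆ s := by
    rcases Metric.mem_nhds_iff.1 hs with ⟨r, rpos, hrs⟩
    exact ⟨r/2, by positivity, (closedBall_subset_ball (by linarith)).trans hrs⟩
  refine ⟨2 * M, by positivity, fun ε εpos => ?_⟩
  set r' : ℝ := min r ε with hr'
  have r'pos : 0 < r' := lt_min rpos εpos
  have hr'r : r' ≤ r := min_le_left _ _
  have hr'ε : r' ≤ ε := min_le_right _ _
  -- eventual conditions on x
  have hball : ∀ᶠ x in 𝓝 a, dist x a < r'/4 := by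
    have := Metric.ball_mem_nhds a (show (0:ℝ) < r'/4 by positivity)
    filter_upwards [this] with x hx using hx
  have hgsmall : ∀ᶠ x in 𝓝 a, 2 * M * ‖g x‖ < r'/4 := by
    have hcont : ContinuousAt g a := hg.continuousAt
    have : Tendsto (fun x => 2 * M * ‖g x‖) (𝓝 a) (𝓝 (2 * M * ‖g a‖)) :=
      (tendsto_const_nhds.mul ((hcont.norm).tendsto))
    rw [ha] at this
    simp only [norm_zero, mul_zero] at this
    exact this.eventually (eventually_lt_nhds (show (0:ℝ) < r'/4 by positivity))
  filter_upwards [hball, hgsmall] with x hx hgx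
  set ρ : ℝ := 2 * M * ‖g x‖ with hρ
  have ρnonneg : 0 ≤ ρ := by positivity
  have hsub : closedBall x ρ ⊆ s := by
    refine (fun y hy => hr ?_)
    have : dist y a ≤ dist y x + dist x a := dist_triangle _ _ _
    have hyx : dist y x ≤ ρ := mem_closedBall.1 hy
    have : dist y a ≤ r := by
      calc dist y a ≤ dist y x + dist x a := dist_triangle _ _ _
        _ ≤ ρ + r'/4 := add_le_add hyx hx.le
        _ ≤ r'/4 + r'/4 := by linarith [hgx.le]
        _ ≤ r := by linarith
    exact mem_closedBall.2 this
  have hsurjon := happrox.surjOn_closedBall_of_nonlinearRightInverse f'symm ρnonneg hsub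
  have hmem : (0:ℂ) ∈ closedBall (g x) (((f'symm.nnnorm : ℝ)⁻¹ - c) * ρ) := by
    rw [mem_closedBall, dist_zero_left, hcoe, ← hM, hρ]
    have : (M⁻¹ - M⁻¹/2) * (2 * M * ‖g x‖) = ‖g x‖ := by
      field_simp
      ring
    rw [this]
  obtain ⟨p, hp, hgp⟩ := hsurjon hmem
  refine ⟨p, hgp, ?_, ?_⟩
  · rw [dist_comm]; exact mem_closedBall.1 hp
  · calc dist p a ≤ dist p x + dist x a := dist_triangle _ _ _
      _ ≤ ρ + r'/4 := add_le_add (mem_closedBall.1 hp) hx.le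
      _ < r'/4 + r'/4 := by linarith [hgx]
      _ < ε := by linarith

/-- Key estimate. -/
lemma key_estimate {g h : E → ℂ} {h' : E → E →L[ℝ] ℂ} {A : E →L[ℝ] ℂ} {a : E}
    (hg : HasStrictFDerivAt g A a) (ha : g a = 0)
    (hsurj : LinearMap.range (A : E →ₗ[ℝ] ℂ) = ⊤)
    (hh : ∀ᶠ x in 𝓝 a, HasFDerivAt h (h' x) x)
    (hh' : ContinuousAt h' a) (hha : h' a = 0)
    (hvan : ∀ᶠ x in 𝓝 a, g x = 0 → h x = 0)
    {ε : ℝ} (hε : 0 < ε) :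
    ∀ᶠ x in 𝓝 a, ‖h x‖ ≤ ε * ‖g x‖ := by
  obtain ⟨C, Cpos, hC⟩ := zeros_near hg ha hsurj
  set ε' : ℝ := ε / C with hε'
  have ε'pos : 0 < ε' := by positivity
  -- a ball on which h is differentiable with small derivative and vanishes on zeros of g
  have hsmall : ∀ᶠ x in 𝓝 a, ‖h' x‖ ≤ ε' := by
    have : Tendsto (fun x => ‖h' x‖) (𝓝 a) (𝓝 ‖h' a‖) := hh'.norm.tendsto
    rw [hha] at this; simp only [norm_zero] at this
    exact this.eventually (eventually_le_nhds ε'pos)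
  obtain ⟨r₁, r₁pos, hball⟩ : ∃ r₁ > 0, ∀ y ∈ ball a r₁,
      HasFDerivAt h (h' y) y ∧ ‖h' y‖ ≤ ε' ∧ (g y = 0 → h y = 0) := by
    rcases Metric.eventually_nhds_iff_ball.1 (hh.and (hsmall.and hvan)) with ⟨r₁, r₁pos, hr₁⟩
    exact ⟨r₁, r₁pos, fun y hy => ⟨(hr₁ y hy).1, (hr₁ y hy).2.1, (hr₁ y hy).2.2⟩⟩
  have hmv : ∀ x ∈ ball a r₁, ∀ p ∈ ball a r₁, ‖h x - h p‖ ≤ ε' * ‖x - p‖ := by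
    intro x hx p hp
    exact (convex_ball a r₁).norm_image_sub_le_of_norm_hasFDerivWithin_le
      (fun y hy => ((hball y hy).1).hasFDerivWithinAt)
      (fun y hy => (hball y hy).2.1) hp hx
  filter_upwards [hC r₁ r₁pos, Metric.ball_mem_nhds a r₁pos] with x hx hxball
  obtain ⟨p, hgp, hdist, hpa⟩ := hx
  have hhp : h p = 0 := (hball p hpa).2.2 hgp
  calc ‖h x‖ = ‖h x - h p‖ := by rw [hhp, sub_zero]
    _ ≤ ε' * ‖x - p‖ := hmv x hxball p hpa
    _ = ε' * dist x p := by rw [dist_eq_norm]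
    _ ≤ ε' * (C * ‖g x‖) := by
        exact mul_le_mul_of_nonneg_left hdist ε'pos.le
    _ = ε * ‖g x‖ := by rw [hε']; field_simp

end Aux

/-- Complex linear relation of the derivatives at the common zero set implies the
existence of a continuous nowhere-vanishing quotient. -/
theorem stmt_6 (n : ℕ) (hn : 2 ≤ n)
    (Ω : Set (EuclideanSpace ℝ (Fin n))) (hΩ : IsOpen Ω)
    (f g : EuclideanSpace ℝ (Fin n) → ℂ)
    (hf : ContDiffOn ℝ 1 f Ω) (hg : ContDiffOn ℝ 1 g Ω)
    (hfsimple : ∀ a ∈ Ω, f a = 0 → Function.Surjective (fderiv ℝ f a))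
    (hgsimple : ∀ a ∈ Ω, g a = 0 → Function.Surjective (fderiv ℝ g a))
    (hzero : ∀ a ∈ Ω, (f a = 0 ↔ g a = 0))
    (hlin : ∀ a ∈ Ω, f a = 0 → ∃ lam : ℂ, fderiv ℝ f a = lam • fderiv ℝ g a) :
    ∃ φ : EuclideanSpace ℝ (Fin n) → ℂ, ContinuousOn φ Ω ∧
      (∀ x ∈ Ω, φ x ≠ 0) ∧ ∀ x ∈ Ω, f x = g x * φ x := by
  classical
  set lam : EuclideanSpace ℝ (Fin n) → ℂ := fun x =>
    if h : x ∈ Ω ∧ f x = 0 then (hlin x h.1 h.2).choose else 0 with hlamdef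
  have P1 : ∀ x ∈ Ω, f x = 0 → fderiv ℝ f x = lam x • fderiv ℝ g x := by
    intro x hx hfx
    have hmem : x ∈ Ω ∧ f x = 0 := ⟨hx, hfx⟩
    simp only [hlamdef, dif_pos hmem]
    exact (hlin x hmem.1 hmem.2).choose_spec
  have P2 : ∀ x ∈ Ω, f x = 0 → lam x ≠ 0 := by
    intro x hx hfx hl0
    obtain ⟨v, hv⟩ := hfsimple x hx hfx 1
    rw [P1 x hx hfx, hl0] at hv
    simpa using hv
  -- differentiability facts
  have hfd : ∀ x ∈ Ω, DifferentiableAt ℝ f x := fun x hx =>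
    (hf.contDiffAt (hΩ.mem_nhds hx)).differentiableAt one_ne_zero
  have hgd : ∀ x ∈ Ω, DifferentiableAt ℝ g x := fun x hx =>
    (hg.contDiffAt (hΩ.mem_nhds hx)).differentiableAt one_ne_zero
  have hf' : ContinuousOn (fderiv ℝ f) Ω := hf.continuousOn_fderiv_of_isOpen hΩ le_rfl
  have hg' : ContinuousOn (fderiv ℝ g) Ω := hg.continuousOn_fderiv_of_isOpen hΩ le_rfl
  refine ⟨fun x => if g x = 0 then lam x else f x / g x, ?_, ?_, ?_⟩
  · -- continuity
    intro a ha
    by_cases hga : g a = 0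
    · -- at a common zero
      have hfa : f a = 0 := (hzero a ha).2 hga
      set A := fderiv ℝ g a with hA
      set L := lam a with hL
      have hAsurj : Function.Surjective A := hgsimple a ha hga
      obtain ⟨v, hv⟩ := hAsurj 1
      have hgstrict : HasStrictFDerivAt g A a :=
        (hg.contDiffAt (hΩ.mem_nhds ha)).hasStrictFDerivAt one_ne_zero
      have hrange : LinearMap.range (A : EuclideanSpace ℝ (Fin n) →ₗ[ℝ] ℂ) = ⊤ :=
        LinearMap.range_eq_top.2 hAsurj
      set h : EuclideanSpace ℝ (Fin n) → ℂ := fun x => f x - L * g x with hh_def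
      set h' : EuclideanSpace ℝ (Fin n) → EuclideanSpace ℝ (Fin n) →L[ℝ] ℂ :=
        fun x => fderiv ℝ f x - L • fderiv ℝ g x with hh'_def
      have hh : ∀ᶠ x in 𝓝 a, HasFDerivAt h (h' x) x := by
        filter_upwards [hΩ.mem_nhds ha] with x hx
        exact ((hfd x hx).hasFDerivAt).sub (((hgd x hx).hasFDerivAt).const_mul L)
      have hh' : ContinuousAt h' a := by
        have cf : ContinuousAt (fderiv ℝ f) a := hf'.continuousAt (hΩ.mem_nhds ha)
        have cg : ContinuousAt (fderiv ℝ g) a := hg'.continuousAt (hΩ.mem_nhds ha)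
        exact cf.sub (cg.const_smul L)
      have hha : h' a = 0 := by
        simp only [hh'_def]
        rw [P1 a ha hfa, ← hL, ← hA, sub_self]
      have hvan : ∀ᶠ x in 𝓝 a, g x = 0 → h x = 0 := by
        filter_upwards [hΩ.mem_nhds ha] with x hx hgx
        have hfx : f x = 0 := (hzero x hx).2 hgx
        simp [hh_def, hfx, hgx]
      have hφa : (if g a = 0 then lam a else f a / g a) = L := by simp [hga, hL]
      rw [ContinuousWithinAt, hφa]
      have hsplit : Ω = (Ω ∩ {x | g x = 0}) ∪ (Ω ∩ {x | g x ≠ 0}) := by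
        ext x; by_cases hx : g x = 0 <;> simp [hx]
      rw [hsplit, nhdsWithin_union, tendsto_sup]
      constructor
      · -- on the zero set: φ = lam = quotient of derivatives
        set F : EuclideanSpace ℝ (Fin n) → ℂ :=
          fun x => fderiv ℝ f x v / fderiv ℝ g x v with hFdef
        have hnum : ContinuousWithinAt (fun x => fderiv ℝ f x v) Ω a :=
          ((hf'.clm_apply continuousOn_const).continuousWithinAt ha)
        have hden : ContinuousWithinAt (fun x => fderiv ℝ g x v) Ω a :=
          ((hg'.clm_apply continuousOn_const).continuousWithinAt ha)
        have hdenne : fderiv ℝ g a v ≠ 0 := by rw [← hA, hv]; exact one_ne_zero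
        have hFc : ContinuousWithinAt F Ω a := hnum.div hden hdenne
        have hFa : F a = L := by
          simp only [hFdef]
          rw [P1 a ha hfa, ← hA, ContinuousLinearMap.smul_apply, hv]
          simp [hL]
        have hFtend : Tendsto F (𝓝[Ω ∩ {x | g x = 0}] a) (𝓝 L) := by
          have := hFc.tendsto
          rw [hFa] at this
          exact this.mono_left (nhdsWithin_mono a inter_subset_left)
        refine hFtend.congr' ?_
        have hne : ∀ᶠ x in 𝓝[Ω ∩ {x | g x = 0}] a, fderiv ℝ g x v ≠ 0 := by
          have : Tendsto (fun x => fderiv ℝ g x v) (𝓝[Ω ∩ {x | g x = 0}] a)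
              (𝓝 (fderiv ℝ g a v)) :=
            hden.tendsto.mono_left (nhdsWithin_mono a inter_subset_left)
          exact this.eventually_ne hdenne
        filter_upwards [hne, eventually_mem_nhdsWithin] with x hxne hxmem
        have hxΩ : x ∈ Ω := hxmem.1
        have hgx : g x = 0 := hxmem.2
        have hfx : f x = 0 := (hzero x hxΩ).2 hgx
        have hder : fderiv ℝ f x v = lam x * fderiv ℝ g x v := by
          rw [P1 x hxΩ hfx]; simp
        simp only [hFdef, hgx, if_pos]
        rw [hder]
        field_simp
      · -- away from the zero set: use the key estimate
        rw [Metric.tendsto_nhds]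
        intro ε εpos
        have hkey := key_estimate hgstrict hga hrange hh hh' hha hvan (half_pos εpos)
        have hkey' : ∀ᶠ x in 𝓝[Ω ∩ {x | g x ≠ 0}] a, ‖h x‖ ≤ ε/2 * ‖g x‖ :=
          hkey.filter_mono nhdsWithin_le_nhds
        filter_upwards [hkey', eventually_mem_nhdsWithin] with x hbound hxmem
        have hgx : g x ≠ 0 := hxmem.2
        have hgxpos : 0 < ‖g x‖ := norm_pos_iff.2 hgx
        have hφx : (if g x = 0 then lam x else f x / g x) = f x / g x := if_neg hgx
        rw [hφx, dist_eq_norm]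
        have heq : f x / g x - L = h x / g x := by
          simp only [hh_def]
          field_simp
        rw [heq, norm_div]
        have hle : ‖h x‖ / ‖g x‖ ≤ ε/2 := (div_le_iff₀ hgxpos).2 hbound
        exact lt_of_le_of_lt hle (half_lt_self εpos)
    · -- g a ≠ 0 : locally φ = f / g
      have hU : IsOpen (Ω ∩ g ⁻¹' ({0}ᶜ)) :=
        hg.continuousOn.isOpen_inter_preimage hΩ isOpen_compl_singleton
      have hUa : (Ω ∩ g ⁻¹' ({0}ᶜ)) ∈ 𝓝 a := hU.mem_nhds ⟨ha, hga⟩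
      have heq : (fun x => if g x = 0 then lam x else f x / g x) =ᶠ[𝓝 a]
          fun x => f x / g x := by
        filter_upwards [hUa] with x hx
        exact if_neg hx.2
      have hca : ContinuousAt (fun x => f x / g x) a :=
        (hfd a ha).continuousAt.div (hgd a ha).continuousAt hga
      exact (hca.congr heq.symm).continuousWithinAt
  · -- nonvanishing
    intro x hx
    by_cases hgx : g x = 0
    · have hfx : f x = 0 := (hzero x hx).2 hgx
      simp only [if_pos hgx]
      exact P2 x hx hfx
    · have hfx : f x ≠ 0 := fun h0 => hgx ((hzero x hx).1 h0)
      simp only [if_neg hgx]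
      exact div_ne_zero hfx hgx
  · -- factorization
    intro x hx
    by_cases hgx : g x = 0
    · have hfx : f x = 0 := (hzero x hx).2 hgx
      simp [hgx, hfx]
    · simp only [if_neg hgx]
      field_simp
end

section
/- Let I ⊆ ℝ be an open interval containing 0, let f ∈ C^k(I) with k ≥ 1, and define g(x) = (1/x)·∫₀ˣ f'(t) dt for x ∈ I \ {0}. Then for every 0 ≤ j ≤ k−1 and every x ∈ I \ {0}, the j-th derivative of g satisfies g^{(j)}(x) = (1/x^{j+1})·∫₀ˣ tʲ f^{(j+1)}(t) dt. -/
open intervalIntegral Set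

/-- Integral formula for the derivatives of the difference quotient
`g x = (1/x) ∫₀ˣ f'(t) dt`. -/
theorem stmt_9 (I : Set ℝ) (hIopen : IsOpen I) (hIinterval : I.OrdConnected)
    (h0 : (0 : ℝ) ∈ I) (k : ℕ) (hk : 1 ≤ k)
    (f : ℝ → ℝ) (hf : ContDiffOn ℝ k f I)
    (g : ℝ → ℝ)
    (hg : ∀ x ∈ I \ {0}, g x = (1 / x) * ∫ t in (0:ℝ)..x, derivWithin f I t) :
    ∀ j : ℕ, j ≤ k - 1 → ∀ x ∈ I \ {0},
      iteratedDerivWithin j g (I \ {0}) x =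
        (1 / x ^ (j + 1)) * ∫ t in (0:ℝ)..x, t ^ j * iteratedDerivWithin (j + 1) f I t := by
  have hu : UniqueDiffOn ℝ I := hIopen.uniqueDiffOn
  have hsOpen : IsOpen (I \ {0}) := hIopen.sdiff isClosed_singleton
  have hsub : ∀ x ∈ I, Set.uIcc (0:ℝ) x ⊆ I := fun x hx => hIinterval.uIcc_subset h0 hx
  have hcontD : ∀ n : ℕ, n ≤ k → ContinuousOn (iteratedDerivWithin n f I) I := fun n hn =>
    hf.continuousOn_iteratedDerivWithin (by exact_mod_cast hn) hu
  -- derivative of D n at points of I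
  have hDD : ∀ n : ℕ, n + 1 ≤ k → ∀ t ∈ I,
      HasDerivAt (iteratedDerivWithin n f I) (iteratedDerivWithin (n + 1) f I t) t := by
    intro n hn t ht
    have hdiff : DifferentiableOn ℝ (iteratedDerivWithin n f I) I :=
      hf.differentiableOn_iteratedDerivWithin (by exact_mod_cast hn) hu
    have h1 : DifferentiableAt ℝ (iteratedDerivWithin n f I) t :=
      (hdiff t ht).differentiableAt (hIopen.mem_nhds ht)
    have h2 : iteratedDerivWithin (n + 1) f I t = deriv (iteratedDerivWithin n f I) t := by
      rw [iteratedDerivWithin_succ, derivWithin_of_isOpen hIopen ht]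
    exact h2 ▸ h1.hasDerivAt
  intro j
  induction j with
  | zero =>
    intro _ x hx
    rw [iteratedDerivWithin_zero, hg x hx]
    congr 1
    · simp
    · refine intervalIntegral.integral_congr fun t ht => ?_
      have ht' : t ∈ I := hsub x hx.1 ht
      rw [pow_zero, one_mul, iteratedDerivWithin_one]
  | succ j ih =>
    intro hj x hx
    have hj' : j ≤ k - 1 := le_trans (Nat.le_succ j) hj
    have hj2 : j + 2 ≤ k := by omega
    obtain ⟨hxI, hx0'⟩ := hx
    have hx0 : x ≠ 0 := hx0'
    set D : ℝ → ℝ := iteratedDerivWithin (j + 1) f I with hD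
    set D2 : ℝ → ℝ := iteratedDerivWithin (j + 2) f I with hD2
    -- rewrite iterated deriv as deriv of the explicit formula
    rw [iteratedDerivWithin_succ,
      derivWithin_of_isOpen hsOpen ⟨hxI, hx0'⟩]
    have heq : deriv (iteratedDerivWithin j g (I \ {0})) x =
        deriv (fun y => (1 / y ^ (j + 1)) * ∫ t in (0:ℝ)..y, t ^ j * D t) x := by
      apply Filter.EventuallyEq.deriv_eq
      filter_upwards [hsOpen.mem_nhds ⟨hxI, hx0'⟩] with y hy
      exact ih hj' y hy
    rw [heq]
    -- integrability of integrands
    have hDcont : ContinuousOn D I := hcontD (j + 1) (by omega)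
    have hD2cont : ContinuousOn D2 I := hcontD (j + 2) hj2
    have hint : ∀ y ∈ I, IntervalIntegrable (fun t => t ^ j * D t) MeasureTheory.volume 0 y := by
      intro y hy
      exact (ContinuousOn.mul (continuousOn_pow j) (hDcont.mono (hsub y hy))).intervalIntegrable
    -- FTC: derivative of the integral at x
    have hF : HasDerivAt (fun y => ∫ t in (0:ℝ)..y, t ^ j * D t) (x ^ j * D x) x := by
      refine intervalIntegral.integral_hasDerivAt_right (hint x hxI) ?_ ?_
      · exact ⟨I, hIopen.mem_nhds hxI,
          ((ContinuousOn.mul (continuousOn_pow j) hDcont).aestronglyMeasurable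
            hIopen.measurableSet)⟩
      · exact ((continuousOn_pow j).mul hDcont).continuousAt (hIopen.mem_nhds hxI)
    -- derivative of 1/y^(j+1)
    have hc : HasDerivAt (fun y : ℝ => (y ^ (j + 1))⁻¹)
        (-(((j : ℝ) + 1) * x ^ j) / (x ^ (j + 1)) ^ 2) x := by
      have := (hasDerivAt_pow (j + 1) x).fun_inv (pow_ne_zero _ hx0)
      simpa using this
    have hprod := hc.fun_mul hF
    have hfun : (fun y => (1 / y ^ (j + 1)) * ∫ t in (0:ℝ)..y, t ^ j * D t) =
        (fun y => (y ^ (j + 1))⁻¹ * ∫ t in (0:ℝ)..y, t ^ j * D t) := by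
      funext y; rw [one_div]
    rw [hfun, hprod.deriv]
    -- integration by parts
    have hparts : ∫ t in (0:ℝ)..x, t ^ (j + 1) * D2 t =
        x ^ (j + 1) * D x - (0:ℝ) ^ (j + 1) * D 0 -
          ∫ t in (0:ℝ)..x, (((j:ℝ) + 1) * t ^ j) * D t := by
      apply intervalIntegral.integral_mul_deriv_eq_deriv_mul
      · intro t _
        simpa using hasDerivAt_pow (j + 1) t
      · intro t ht
        exact hDD (j + 1) hj2 t (hsub x hxI ht)
      · exact (Continuous.continuousOn (by continuity)).intervalIntegrable
      · exact (hD2cont.mono (hsub x hxI)).intervalIntegrable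
    have hpull : ∫ t in (0:ℝ)..x, (((j:ℝ) + 1) * t ^ j) * D t =
        ((j:ℝ) + 1) * ∫ t in (0:ℝ)..x, t ^ j * D t := by
      simp_rw [mul_assoc]
      exact intervalIntegral.integral_const_mul _ _
    rw [hparts, hpull]
    have hxp : (x : ℝ) ^ (j + 1) ≠ 0 := pow_ne_zero _ hx0
    field_simp
    ring
end

section
/- Define f, g : ℝ² → ℂ by f(x,y) = x + x² + i·x + i·y and g(x,y) = x + i·x + i·y. Then the quotient f/g, defined on ℝ² \ {(0,0)}, extends to a continuous function φ : ℝ² → ℂ with φ(0,0) = 1, but this extension φ is not differentiable at the origin. -/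
open Complex Filter

noncomputable def phi17 : ℝ × ℝ → ℂ :=
  fun p => 1 + (p.1 : ℂ) ^ 2 / ((p.1 : ℂ) + Complex.I * p.1 + Complex.I * p.2)

lemma phi17_den_ne (p : ℝ × ℝ) (hp : p ≠ (0, 0)) :
    ((p.1 : ℂ) + Complex.I * p.1 + Complex.I * p.2) ≠ 0 := by
  intro h
  apply hp
  simp [Complex.ext_iff] at h
  obtain ⟨h1, h2⟩ := h
  ext <;> simp [h1] <;> linarith

lemma phi17_bound (p : ℝ × ℝ) : ‖phi17 p - 1‖ ≤ |p.1| := by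
  rcases eq_or_ne p.1 0 with h | h
  · simp [phi17, h]
  · have hden : ((p.1 : ℂ) + Complex.I * p.1 + Complex.I * p.2) ≠ 0 := by
      intro hc
      simp [Complex.ext_iff] at hc
      exact h hc.1
    have : phi17 p - 1 = (p.1 : ℂ) ^ 2 / ((p.1 : ℂ) + Complex.I * p.1 + Complex.I * p.2) := by
      simp [phi17]
    rw [this, norm_div]
    have hre : |p.1| ≤ ‖(p.1 : ℂ) + Complex.I * p.1 + Complex.I * p.2‖ := by
      have := Complex.abs_re_le_norm ((p.1 : ℂ) + Complex.I * p.1 + Complex.I * p.2)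
      simpa using this
    have hnum : ‖((p.1 : ℂ)) ^ 2‖ = |p.1| ^ 2 := by
      simp [norm_pow]
    rw [hnum]
    have hpos : (0:ℝ) < |p.1| := abs_pos.mpr h
    calc |p.1| ^ 2 / ‖(p.1 : ℂ) + Complex.I * p.1 + Complex.I * p.2‖
        ≤ |p.1| ^ 2 / |p.1| := by
          apply div_le_div_of_nonneg_left (by positivity) hpos hre
      _ = |p.1| := by field_simp [sq]

/-- The quotient of `f(x,y) = x + x² + i·x + i·y` by `g(x,y) = x + i·x + i·y` extends
to a continuous function on ℝ² with value 1 at the origin, but the extension is not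
(real Fréchet) differentiable at the origin. -/
theorem stmt_17 (f g : ℝ × ℝ → ℂ)
    (hf : ∀ x y : ℝ, f (x, y) =
      (x : ℂ) + (x : ℂ) ^ 2 + Complex.I * (x : ℂ) + Complex.I * (y : ℂ))
    (hg : ∀ x y : ℝ, g (x, y) = (x : ℂ) + Complex.I * (x : ℂ) + Complex.I * (y : ℂ)) :
    ∃ φ : ℝ × ℝ → ℂ, Continuous φ ∧ φ (0, 0) = 1 ∧
      (∀ p : ℝ × ℝ, p ≠ (0, 0) → φ p = f p / g p) ∧
      ¬ DifferentiableAt ℝ φ (0, 0) := by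
  have h1I : (1 : ℂ) + Complex.I ≠ 0 := by
    intro h; simpa [Complex.ext_iff] using h
  refine ⟨phi17, ?_, ?_, ?_, ?_⟩
  · -- continuity
    rw [continuous_iff_continuousAt]
    intro p
    rcases eq_or_ne p (0, 0) with hp | hp
    · subst hp
      rw [ContinuousAt]
      have h0 : phi17 (0, 0) = 1 := by simp [phi17]
      rw [h0]
      have htend : Tendsto (fun p : ℝ × ℝ => phi17 p - 1) (nhds (0, 0)) (nhds 0) := by
        apply squeeze_zero_norm phi17_bound
        have : Tendsto (fun p : ℝ × ℝ => p.1) (nhds ((0:ℝ), (0:ℝ))) (nhds 0) :=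
          continuous_fst.tendsto _
        simpa using this.abs
      have := htend.add (tendsto_const_nhds (x := (1:ℂ)))
      simpa using this
    · apply ContinuousAt.add continuousAt_const
      apply ContinuousAt.div
      · fun_prop
      · fun_prop
      · exact phi17_den_ne p hp
  · simp [phi17]
  · rintro ⟨x, y⟩ hp
    have hden := phi17_den_ne (x, y) hp
    simp only at hden
    rw [hf, hg]
    simp only [phi17]
    rw [one_add_div hden]
    congr 1
    ring
  · intro hdiff
    have hL := hdiff.hasFDerivAt
    set L := fderiv ℝ phi17 (0, 0) with hLdef
    -- direction (1, 0)
    have c1 : HasDerivAt (fun t : ℝ => (t, (0:ℝ))) ((1:ℝ), (0:ℝ)) 0 :=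
      (hasDerivAt_id 0).prodMk (hasDerivAt_const 0 0)
    have d1 : HasDerivAt (phi17 ∘ fun t : ℝ => (t, (0:ℝ))) (L (1, 0)) 0 :=
      hL.comp_hasDerivAt_of_eq 0 c1 rfl
    have e1 : (phi17 ∘ fun t : ℝ => (t, (0:ℝ))) = fun t : ℝ => 1 + (t : ℂ) / (1 + Complex.I) := by
      funext t
      simp only [Function.comp, phi17]
      rcases eq_or_ne t 0 with h | h
      · simp [h]
      · have ht : (t : ℂ) ≠ 0 := Complex.ofReal_ne_zero.mpr h
        have : (t : ℂ) + Complex.I * t + Complex.I * (0:ℝ) = t * (1 + Complex.I) := by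
          push_cast; ring
        rw [this, sq, mul_div_mul_left _ _ ht]
    have d1' : HasDerivAt (fun t : ℝ => 1 + (t : ℂ) / (1 + Complex.I)) (1 / (1 + Complex.I)) 0 := by
      have : HasDerivAt (fun t : ℝ => (t : ℂ)) 1 0 := by
        simpa using (hasDerivAt_id (0:ℝ)).ofReal_comp
      simpa using (this.div_const (1 + Complex.I)).const_add 1
    have hL1 : L (1, 0) = 1 / (1 + Complex.I) := by
      apply HasDerivAt.unique _ d1'
      rw [← e1]; exact d1
    -- direction (0, 1)
    have c2 : HasDerivAt (fun t : ℝ => ((0:ℝ), t)) ((0:ℝ), (1:ℝ)) 0 :=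
      (hasDerivAt_const 0 0).prodMk (hasDerivAt_id 0)
    have d2 : HasDerivAt (phi17 ∘ fun t : ℝ => ((0:ℝ), t)) (L (0, 1)) 0 :=
      hL.comp_hasDerivAt_of_eq 0 c2 rfl
    have e2 : (phi17 ∘ fun t : ℝ => ((0:ℝ), t)) = fun _ : ℝ => (1 : ℂ) := by
      funext t; simp [Function.comp, phi17]
    have hL2 : L (0, 1) = 0 := by
      apply HasDerivAt.unique _ (hasDerivAt_const (0:ℝ) (1:ℂ))
      rw [← e2]; exact d2
    -- direction (1, -1)
    have c3 : HasDerivAt (fun t : ℝ => (t, -t)) ((1:ℝ), (-1:ℝ)) 0 :=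
      (hasDerivAt_id 0).prodMk (hasDerivAt_id 0).neg
    have d3 : HasDerivAt (phi17 ∘ fun t : ℝ => (t, -t)) (L (1, -1)) 0 :=
      hL.comp_hasDerivAt_of_eq 0 c3 (by norm_num)
    have e3 : (phi17 ∘ fun t : ℝ => (t, -t)) = fun t : ℝ => 1 + (t : ℂ) := by
      funext t
      simp only [Function.comp, phi17]
      rcases eq_or_ne t 0 with h | h
      · simp [h]
      · have ht : (t : ℂ) ≠ 0 := Complex.ofReal_ne_zero.mpr h
        have : (t : ℂ) + Complex.I * t + Complex.I * ((-t : ℝ) : ℂ) = t := by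
          push_cast; ring
        rw [this, sq, mul_div_assoc, div_self ht, mul_one]
    have d3' : HasDerivAt (fun t : ℝ => 1 + (t : ℂ)) 1 0 := by
      have : HasDerivAt (fun t : ℝ => (t : ℂ)) 1 0 := by
        simpa using (hasDerivAt_id (0:ℝ)).ofReal_comp
      simpa using this.const_add 1
    have hL3 : L (1, -1) = 1 := by
      apply HasDerivAt.unique _ d3'
      rw [← e3]; exact d3
    have hsub : ((1:ℝ), (-1:ℝ)) = ((1:ℝ), (0:ℝ)) - ((0:ℝ), (1:ℝ)) := by
      simp [Prod.ext_iff]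
    rw [hsub, L.map_sub, hL1, hL2, sub_zero] at hL3
    rw [div_eq_one_iff_eq h1I] at hL3
    simp [Complex.ext_iff] at hL3
end

section
/- There exists a function φ : ℝ³ → ℝ with the following properties: φ vanishes on the z-axis {(0,0,z) | z ∈ ℝ}; for every C¹ path γ : (−ε, ε) → ℝ³ with γ(0) = (0,0,0) whose velocity γ'(0) is transversal to the z-axis (i.e., the first two components of γ'(0) are not both zero), the limit of φ(γ(t)) as t → 0 equals 0; yet φ is not continuous at the origin. -/
open Real Filter

private lemma exp_neg_inv_le_aux (s : ℝ) (hs : 0 < s) : Real.exp (-(1/s)) ≤ 4 * s^2 := by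
  have h1 : 1/(2*s) ≤ Real.exp (1/(2*s)) := by
    have := Real.add_one_le_exp (1/(2*s)); linarith
  have h2 : (1/(2*s))^2 ≤ Real.exp (1/(2*s))^2 := by
    apply pow_le_pow_left₀ (by positivity) h1
  have h3 : Real.exp (1/(2*s))^2 = Real.exp (1/s) := by
    rw [← Real.exp_nat_mul]
    norm_num
    ring_nf
  have h4 : 1/(4*s^2) ≤ Real.exp (1/s) := by
    rw [← h3]
    calc 1/(4*s^2) = (1/(2*s))^2 := by ring
      _ ≤ _ := h2
  rw [Real.exp_neg]
  have h5 : (0:ℝ) < 1/(4*s^2) := by positivity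
  have := inv_anti₀ h5 h4
  calc (Real.exp (1/s))⁻¹ ≤ (1/(4*s^2))⁻¹ := this
    _ = 4*s^2 := by field_simp

/-- Key estimate: a path with nonzero first-component velocity eventually escapes
the exponential surface. -/
private lemma key (f g : ℝ → ℝ) (a c : ℝ) (hf : HasDerivAt f a 0) (hf0 : f 0 = 0)
    (ha : a ≠ 0) (hg : HasDerivAt g c 0) (hg0 : g 0 = 0) :
    ∀ᶠ t in nhdsWithin (0:ℝ) {0}ᶜ, g t ≠ 0 → Real.exp (-(1/(g t)^2)) < (f t)^2 := by
  have hfo : (fun t => f t - f 0 - (t - 0) • a) =o[nhds 0] fun t => t - 0 :=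
    hasDerivAt_iff_isLittleO.mp hf
  have hgo : (fun t => g t - g 0 - (t - 0) • c) =o[nhds 0] fun t => t - 0 :=
    hasDerivAt_iff_isLittleO.mp hg
  simp only [hf0, hg0, sub_zero, smul_eq_mul] at hfo hgo
  have hfb : ∀ᶠ t in nhds (0:ℝ), ‖f t - t * a‖ ≤ |a|/2 * ‖t‖ :=
    hfo.def (by positivity)
  have hgb : ∀ᶠ t in nhds (0:ℝ), ‖g t - t * c‖ ≤ 1 * ‖t‖ := hgo.def one_pos
  obtain ⟨M, hM⟩ : ∃ M : ℝ, M = |c| + 1 := ⟨_, rfl⟩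
  have hMpos : 0 < M := by rw [hM]; positivity
  have hsmall : ∀ᶠ t in nhds (0:ℝ), |t| < |a| / (8 * M^2) := by
    have : (0:ℝ) < |a| / (8 * M^2) := by positivity
    have := Metric.ball_mem_nhds (0:ℝ) this
    filter_upwards [this] with t ht
    simpa [Real.dist_eq] using ht
  have hall := (hfb.and (hgb.and hsmall)).filter_mono (nhdsWithin_le_nhds (s := ({0}ᶜ : Set ℝ)))
  filter_upwards [hall, self_mem_nhdsWithin] with t ⟨h1, h2, h3⟩ ht0 hgt
  simp only [Set.mem_compl_iff, Set.mem_singleton_iff] at ht0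
  have htpos : 0 < |t| := abs_pos.mpr ht0
  -- lower bound on |f t|
  have hfl : |a|/2 * |t| ≤ |f t| := by
    have : |t * a| - |f t - t * a| ≤ |f t| := by
      have := abs_sub_abs_le_abs_sub (t * a) (f t)
      rw [abs_sub_comm] at this
      linarith
    rw [abs_mul, mul_comm] at this
    rw [Real.norm_eq_abs, Real.norm_eq_abs] at h1
    linarith
  -- upper bound on |g t|
  have hgu : |g t| ≤ M * |t| := by
    rw [Real.norm_eq_abs, Real.norm_eq_abs] at h2
    have : |g t| ≤ |g t - t * c| + |t * c| := by
      have := abs_add_le (g t - t * c) (t * c); simpa using this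
    rw [abs_mul, mul_comm |t| |c|] at this
    rw [hM]
    nlinarith [abs_nonneg t]
  have hg2 : (0:ℝ) < (g t)^2 := by positivity
  have hexp : Real.exp (-(1/(g t)^2)) ≤ 4 * ((g t)^2)^2 := exp_neg_inv_le_aux _ hg2
  have hgu2 : (g t)^2 ≤ M^2 * t^2 := by nlinarith [abs_nonneg (g t), abs_nonneg t, sq_abs (g t), sq_abs t]
  have hfl2 : (|a|/2 * |t|)^2 ≤ (f t)^2 := by
    have h := pow_le_pow_left₀ (by positivity) hfl 2
    rwa [sq_abs] at h
  have hstep : 4 * ((g t)^2)^2 < (|a|/2 * |t|)^2 := by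
    have ht2 : t^2 = |t|^2 := (sq_abs t).symm
    have h4 : 4 * ((g t)^2)^2 ≤ 4 * (M^2 * t^2)^2 := by nlinarith
    have h5 : 4 * (M^2 * t^2)^2 < (|a|/2 * |t|)^2 := by
      rw [ht2]
      have h6 : |t| * (8 * M^2) < |a| := by
        rw [lt_div_iff₀ (by positivity)] at h3
        linarith [h3]
      have h7 : (|t| * (8 * M^2))^2 < |a|^2 := by
        apply pow_lt_pow_left₀ h6 (by positivity)
        norm_num
      have h8 := mul_lt_mul_of_pos_right h7 (pow_pos htpos 2)
      have hY : (0:ℝ) ≤ |a|^2 * |t|^2 := by positivity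
      ring_nf at h8 ⊢
      nlinarith [h8, hY]
    linarith
  calc Real.exp (-(1/(g t)^2)) ≤ 4 * ((g t)^2)^2 := hexp
    _ < (|a|/2 * |t|)^2 := hstep
    _ ≤ (f t)^2 := hfl2

/-- There is a function on ℝ³ vanishing on the z-axis whose limit along every C¹ path
through the origin transversal to the z-axis is 0, yet which is discontinuous at the
origin. -/
theorem stmt_18 :
    ∃ φ : ℝ × ℝ × ℝ → ℝ,
      (∀ z : ℝ, φ (0, 0, z) = 0) ∧
      (∀ ε : ℝ, 0 < ε → ∀ γ : ℝ → ℝ × ℝ × ℝ,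
        ContDiffOn ℝ 1 γ (Set.Ioo (-ε) ε) →
        γ 0 = (0, 0, 0) →
        ((deriv γ 0).1 ≠ 0 ∨ (deriv γ 0).2.1 ≠ 0) →
        Filter.Tendsto (fun t => φ (γ t)) (nhdsWithin 0 (Set.Ioo (-ε) ε \ {0}))
          (nhds 0)) ∧
      ¬ ContinuousAt φ (0, 0, 0) := by
  classical
  refine ⟨fun p => if p.2.2 ≠ 0 ∧ p.1^2 + p.2.1^2 = Real.exp (-(1/p.2.2^2)) then 1 else 0,
    ?_, ?_, ?_⟩
  · intro z
    show (if z ≠ 0 ∧ (0:ℝ)^2 + (0:ℝ)^2 = Real.exp (-(1/z^2)) then (1:ℝ) else 0) = 0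
    rw [if_neg]
    rintro ⟨hz, he⟩
    have : (0:ℝ) < Real.exp (-(1/z^2)) := Real.exp_pos _
    rw [← he] at this
    norm_num at this
  · intro ε hε γ hγ hγ0 hder
    have hmem : Set.Ioo (-ε) ε ∈ nhds (0:ℝ) := Ioo_mem_nhds (by linarith) hε
    have hdiff : DifferentiableAt ℝ γ 0 :=
      ((hγ.differentiableOn one_ne_zero).differentiableAt hmem)
    have hd : HasDerivAt γ (deriv γ 0) 0 := hdiff.hasDerivAt
    set L := deriv γ 0 with hL
    have hx : HasDerivAt (fun t => (γ t).1) L.1 0 := hd.fst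
    have hy : HasDerivAt (fun t => (γ t).2.1) L.2.1 0 := hd.snd.fst
    have hz : HasDerivAt (fun t => (γ t).2.2) L.2.2 0 := hd.snd.snd
    have hx0 : (γ 0).1 = 0 := by rw [hγ0]
    have hy0 : (γ 0).2.1 = 0 := by rw [hγ0]
    have hz0 : (γ 0).2.2 = 0 := by rw [hγ0]
    have hkey : ∀ᶠ t in nhdsWithin (0:ℝ) {0}ᶜ,
        (γ t).2.2 ≠ 0 → Real.exp (-(1/((γ t).2.2)^2)) < ((γ t).1)^2 + ((γ t).2.1)^2 := by
      rcases hder with ha | hb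
      · have := key _ _ _ _ hx hx0 ha hz hz0
        filter_upwards [this] with t ht hgt
        have := ht hgt
        nlinarith [sq_nonneg ((γ t).2.1)]
      · have := key _ _ _ _ hy hy0 hb hz hz0
        filter_upwards [this] with t ht hgt
        have := ht hgt
        nlinarith [sq_nonneg ((γ t).1)]
    have hmono : nhdsWithin (0:ℝ) (Set.Ioo (-ε) ε \ {0}) ≤ nhdsWithin 0 {0}ᶜ := by
      apply nhdsWithin_mono
      intro t ht
      exact ht.2
    have heq : ∀ᶠ t in nhdsWithin (0:ℝ) (Set.Ioo (-ε) ε \ {0}),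
        (if (γ t).2.2 ≠ 0 ∧ ((γ t).1)^2 + ((γ t).2.1)^2 = Real.exp (-(1/((γ t).2.2)^2))
          then (1:ℝ) else 0) = 0 := by
      filter_upwards [hkey.filter_mono hmono] with t ht
      rw [if_neg]
      rintro ⟨hgt, he⟩
      exact (ht hgt).ne' he
    exact Filter.Tendsto.congr' (heq.mono fun t ht => ht.symm) tendsto_const_nhds
  · intro hc
    have h0 : (fun p : ℝ × ℝ × ℝ =>
        if p.2.2 ≠ 0 ∧ p.1^2 + p.2.1^2 = Real.exp (-(1/p.2.2^2)) then (1:ℝ) else 0)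
        (0, 0, 0) = 0 := by
      show (if (0:ℝ) ≠ 0 ∧ (0:ℝ)^2 + (0:ℝ)^2 = Real.exp (-(1/(0:ℝ)^2)) then (1:ℝ) else 0) = 0
      rw [if_neg]; rintro ⟨hz, _⟩; exact hz rfl
    rw [Metric.continuousAt_iff] at hc
    obtain ⟨δ, hδ, hball⟩ := hc (1/2) (by norm_num)
    set t : ℝ := min (δ/2) (1/2) with htdef
    have htpos : 0 < t := lt_min (by linarith) (by norm_num)
    have ht1 : t ≤ δ/2 := min_le_left _ _
    have ht2 : t ≤ 1/2 := min_le_right _ _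
    set q : ℝ × ℝ × ℝ := (Real.sqrt (Real.exp (-(1/t^2))), 0, t) with hq
    have hq1 : q.1^2 = Real.exp (-(1/t^2)) := by
      simp only [hq]
      rw [sq, Real.mul_self_sqrt (Real.exp_pos _).le]
    have hφq : (if q.2.2 ≠ 0 ∧ q.1^2 + q.2.1^2 = Real.exp (-(1/q.2.2^2)) then (1:ℝ) else 0) = 1 := by
      rw [if_pos]
      constructor
      · exact ne_of_gt htpos
      · simp only [hq]
        rw [hq1]
        norm_num
    have hqdist : dist q (0, 0, 0) < δ := by
      have hexp : Real.exp (-(1/t^2)) ≤ 4 * (t^2)^2 := exp_neg_inv_le_aux _ (by positivity)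
      have hs : Real.sqrt (Real.exp (-(1/t^2))) ≤ 2 * t^2 := by
        calc Real.sqrt (Real.exp (-(1/t^2))) ≤ Real.sqrt (4 * (t^2)^2) :=
          Real.sqrt_le_sqrt hexp
          _ = 2 * t^2 := by
            rw [show 4 * (t^2)^2 = (2*t^2)^2 by ring, Real.sqrt_sq (by positivity)]
      have h2t2 : 2 * t^2 ≤ t := by nlinarith
      have htlt : t < δ := by linarith
      rw [Prod.dist_eq, Prod.dist_eq]
      simp only [hq, Real.dist_eq]
      rw [max_lt_iff]
      constructor
      · rw [sub_zero, abs_of_nonneg (Real.sqrt_nonneg _)]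
        calc Real.sqrt (Real.exp (-(1/t^2))) ≤ 2*t^2 := hs
          _ ≤ t := h2t2
          _ < δ := htlt
      · rw [max_lt_iff]
        constructor
        · simpa using hδ
        · rw [sub_zero, abs_of_pos htpos]; exact htlt
    have := hball hqdist
    rw [hφq, if_neg (by rintro ⟨hz, _⟩; exact hz rfl)] at this
    norm_num at this
end
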